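/- arXiv:1512.01702 — 3 statements merged into one kernel-verified Lean document; each statement's English description precedes it below -/
import Mathlib

section
/- Let B ⊆ ℤ be a Bohr-zero non-periodic set. Then the set of discriminants over B, D := {x·y − z² | x, y, z ∈ B}, satisfies D = ℤ. -/
open MeasureTheory Filter Topology Polynomial

noncomputable section

instance : Fact ((0:ℝ) < 1) := ⟨zero_lt_one⟩

/-- A non-periodic Bohr set in an abelian group `G`: the preimage of an open
subset of a finite-dimensional torus under a homomorphism with dense image. -/
def IsNonPeriodicBohr {G : Type*} [AddCommGroup G] (B : Set G) : Prop :=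
  ∃ m : ℕ, 1 ≤ m ∧ ∃ (τ : G →+ (Fin m → AddCircle (1 : ℝ)))
    (U : Set (Fin m → AddCircle (1 : ℝ))),
      DenseRange τ ∧ IsOpen U ∧ B = τ ⁻¹' U

/-- A Bohr-zero non-periodic set: additionally the open set contains `0`. -/
def IsBohrZeroNonPeriodic {G : Type*} [AddCommGroup G] (B : Set G) : Prop :=
  ∃ m : ℕ, 1 ≤ m ∧ ∃ (τ : G →+ (Fin m → AddCircle (1 : ℝ)))
    (U : Set (Fin m → AddCircle (1 : ℝ))),
      DenseRange τ ∧ IsOpen U ∧ (0 : Fin m → AddCircle (1 : ℝ)) ∈ U ∧ B = τ ⁻¹' U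

/-- Compatibility: `Complex.abs` as the absolute value given by the norm. -/
def Complex.abs : AbsoluteValue ℂ ℝ where
  toFun z := ‖z‖
  map_mul' := norm_mul
  nonneg' := norm_nonneg
  eq_zero' _ := norm_eq_zero
  add_le' := norm_add_le

theorem Complex.norm_eq_abs (z : ℂ) : ‖z‖ = Complex.abs z := rfl

theorem Complex.abs_apply (z : ℂ) : Complex.abs z = Real.sqrt (Complex.normSq z) :=
  Complex.norm_def z

theorem Complex.abs_exp_ofReal_mul_I (x : ℝ) : Complex.abs (Complex.exp (x * Complex.I)) = 1 :=
  Complex.norm_exp_ofReal_mul_I x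

theorem Complex.abs_conj (z : ℂ) : Complex.abs ((starRingEnd ℂ) z) = Complex.abs z :=
  Complex.norm_conj z

theorem Complex.abs_ofReal (r : ℝ) : Complex.abs (r : ℂ) = |r| := by
  show ‖(r : ℂ)‖ = |r|; simp

theorem Complex.abs_natCast (n : ℕ) : Complex.abs (n : ℂ) = n := by
  show ‖(n : ℂ)‖ = n; simp

theorem Complex.sq_abs (z : ℂ) : Complex.abs z ^ 2 = Complex.normSq z := Complex.sq_norm z

section WeylMachinery

open Filter Topology Finset

set_option maxHeartbeats 1600000

namespace WeylAux

/-- `e x = exp(2πix)`. -/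
def e (x : ℝ) : ℂ := Complex.exp (2 * Real.pi * Complex.I * x)

lemma e_add (x y : ℝ) : e (x + y) = e x * e y := by
  rw [e, e, e, ← Complex.exp_add]; push_cast; ring_nf

lemma e_zero : e 0 = 1 := by simp [e]

lemma abs_e (x : ℝ) : Complex.abs (e x) = 1 := by
  rw [e]
  rw [show (2 * Real.pi * Complex.I * x) = (2 * Real.pi * x : ℝ) * Complex.I by push_cast; ring]
  exact Complex.abs_exp_ofReal_mul_I _

lemma e_eq_one_iff {x : ℝ} : e x = 1 ↔ ∃ k : ℤ, x = k := by
  rw [e, Complex.exp_eq_one_iff]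
  constructor
  · rintro ⟨n, hn⟩
    refine ⟨n, ?_⟩
    have h2 : (2 * (Real.pi:ℂ) * Complex.I) ≠ 0 := by
      simp [Real.pi_ne_zero, Complex.I_ne_zero]
    have : (x : ℂ) = n := mul_left_cancel₀ h2 (by linear_combination hn)
    exact_mod_cast this
  · rintro ⟨k, rfl⟩
    exact ⟨k, by push_cast; ring⟩

lemma e_nat_mul (s : ℕ) (x : ℝ) : e (s * x) = (e x) ^ s := by
  induction s with
  | zero => simp [e_zero]
  | succ n ih => rw [pow_succ, ← ih, ← e_add]; norm_num; ring_nf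

lemma e_mul_conj (x y : ℝ) : e x * (starRingEnd ℂ) (e y) = e (x - y) := by
  have : (starRingEnd ℂ) (e y) = e (-y) := by
    rw [e, e, ← Complex.exp_conj]
    congr 1
    have : (starRingEnd ℂ) ((2:ℂ) * Real.pi * Complex.I * y) = -(2 * Real.pi * Complex.I * y) := by
      simp [map_mul, Complex.conj_I, Complex.conj_ofReal]
      left
      exact Complex.conj_ofNat 2
    rw [this]
    push_cast
    ring
  rw [this, ← e_add]; ring_nf

/-- Geometric sum bound. -/
lemma geom_bound (x c : ℝ) (hx : e x ≠ 1) (N : ℕ) :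
    Complex.abs (∑ s ∈ range N, e (s * x + c)) ≤ 2 / Complex.abs (e x - 1) := by
  have h1 : (∑ s ∈ range N, e (s * x + c)) = (∑ s ∈ range N, (e x) ^ s) * e c := by
    rw [Finset.sum_mul]
    exact Finset.sum_congr rfl fun s _ => by rw [e_add, e_nat_mul]
  rw [h1, map_mul, abs_e, mul_one, geom_sum_eq hx]
  rw [map_div₀]
  gcongr
  calc Complex.abs ((e x) ^ N - 1) ≤ Complex.abs ((e x) ^ N) + 1 := by
        simpa using Complex.abs.sub_le_add ((e x)^N) 1
    _ ≤ 2 := by rw [map_pow, abs_e, one_pow]; norm_num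

lemma abs_e_sub_one (x : ℝ) : Complex.abs (e x - 1) = 2 * |Real.sin (Real.pi * x)| := by
  have h : e x = Complex.exp ((2 * Real.pi * x : ℝ) * Complex.I) := by
    rw [e]; congr 1; push_cast; ring
  rw [h, Complex.exp_mul_I]
  have : Complex.cos ((2 * Real.pi * x : ℝ)) + Complex.sin ((2 * Real.pi * x : ℝ)) * Complex.I - 1
      = Complex.ofReal (Real.cos (2 * Real.pi * x) - 1) + Complex.ofReal (Real.sin (2 * Real.pi * x)) * Complex.I := by
    push_cast [Complex.ofReal_cos, Complex.ofReal_sin]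
    ring
  rw [this]
  rw [Complex.abs_apply, Complex.normSq_add_mul_I]
  have hsin : Real.sin (2 * Real.pi * x) = Real.sin (Real.pi * x + Real.pi * x) := by ring_nf
  have hcos : Real.cos (2 * Real.pi * x) = 1 - 2 * Real.sin (Real.pi * x) ^ 2 := by
    rw [show 2 * Real.pi * x = 2 * (Real.pi * x) by ring, Real.cos_two_mul']
    rw [Real.sin_sq_eq_half_sub]
    ring_nf
    rw [Real.cos_sq]
    ring
  rw [hcos]
  have : (1 - 2 * Real.sin (Real.pi * x) ^ 2 - 1) ^ 2 + Real.sin (2 * Real.pi * x) ^ 2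
      = 4 * Real.sin (Real.pi * x) ^ 2 := by
    rw [show 2 * Real.pi * x = 2 * (Real.pi * x) by ring, Real.sin_two_mul]
    have := Real.sin_sq_add_cos_sq (Real.pi * x)
    nlinarith [Real.sin_sq_add_cos_sq (Real.pi * x)]
  rw [this]
  rw [show (4 : ℝ) * Real.sin (Real.pi * x) ^ 2 = (2 * |Real.sin (Real.pi * x)|)^2 by
    rw [mul_pow, sq_abs]; ring]
  exact Real.sqrt_sq (by positivity)


/-- lower bound for |sin π θ| in terms of distance to nearest integer -/
lemma sin_lower (θ : ℝ) : 2 * |θ - round θ| ≤ |Real.sin (Real.pi * θ)| := by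
  set d : ℝ := θ - round θ with hd
  have hle : |d| ≤ 1/2 := abs_sub_round θ
  have h1 : Real.sin (Real.pi * θ) = (-1 : ℝ) ^ (round θ) * Real.sin (Real.pi * d) := by
    rw [show Real.pi * θ = Real.pi * d + (round θ) * Real.pi by rw [hd]; ring]
    exact Real.sin_add_int_mul_pi _ _
  have h2 : |Real.sin (Real.pi * θ)| = |Real.sin (Real.pi * d)| := by
    rw [h1, abs_mul]
    have : |(-1:ℝ) ^ (round θ)| = 1 := by
      rcases Int.even_or_odd (round θ) with he | ho
      · rw [he.neg_one_zpow]; simp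
      · rw [Odd.neg_one_zpow ho]; simp
    rw [this, one_mul]
  rw [h2]
  have h3 : |Real.sin (Real.pi * d)| = Real.sin (Real.pi * |d|) := by
    rcases abs_cases d with ⟨h, _⟩ | ⟨h, hneg⟩
    · rw [h]
      exact abs_of_nonneg (Real.sin_nonneg_of_nonneg_of_le_pi (by positivity)
        (by nlinarith [Real.pi_pos, hle]))
    · rw [h, show Real.pi * -d = -(Real.pi * d) by ring, Real.sin_neg]
      have hnn : 0 ≤ Real.sin (-(Real.pi * d)) := by
        apply Real.sin_nonneg_of_nonneg_of_le_pi (by nlinarith [Real.pi_pos])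
        nlinarith [Real.pi_pos, hle, abs_nonneg d]
      rw [Real.sin_neg] at hnn
      rw [abs_of_nonpos (by linarith)]
  rw [h3]
  have := Real.mul_le_sin (x := Real.pi * |d|) (by positivity)
    (by nlinarith [Real.pi_pos, hle])
  calc 2 * |d| = 2 / Real.pi * (Real.pi * |d|) := by
        field_simp
    _ ≤ Real.sin (Real.pi * |d|) := this

lemma e_ne_one_of_far {θ ε : ℝ} (hε : 0 < ε) (h : ε ≤ |θ - round θ|) : e θ ≠ 1 := by
  intro h1
  obtain ⟨k, rfl⟩ := e_eq_one_iff.mp h1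
  simp at h
  linarith

/-- Dirichlet kernel bound -/
lemma dirichlet_bound {θ ε : ℝ} (hε : 0 < ε) (h : ε ≤ |θ - round θ|) (n : ℕ) :
    Complex.abs (∑ j ∈ range n, e (j * θ)) ≤ 1 / (2 * ε) := by
  have hne := e_ne_one_of_far hε h
  have h1 : Complex.abs (∑ j ∈ range n, e (j * θ)) ≤ 2 / Complex.abs (e θ - 1) := by
    have := geom_bound θ 0 hne n
    simpa using this
  have h2 : 4 * ε ≤ Complex.abs (e θ - 1) := by
    rw [abs_e_sub_one]
    have := sin_lower θ
    linarith [h]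
  calc Complex.abs (∑ j ∈ range n, e (j * θ)) ≤ 2 / Complex.abs (e θ - 1) := h1
    _ ≤ 2 / (4 * ε) := by
        apply div_le_div_of_nonneg_left (by norm_num) (by linarith) h2
    _ = 1 / (2 * ε) := by ring


lemma abs_sum_le' {ι : Type*} (s : Finset ι) (f : ι → ℂ) :
    Complex.abs (∑ i ∈ s, f i) ≤ ∑ i ∈ s, Complex.abs (f i) := by
  simpa only [Complex.norm_eq_abs] using norm_sum_le s f

lemma linear_weyl (x c : ℝ) (hx : e x ≠ 1) :
    Tendsto (fun N : ℕ => Complex.abs (∑ s ∈ range N, e (s * x + c)) / N) atTop (nhds 0) := by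
  have h0 : Tendsto (fun N : ℕ => (2 / Complex.abs (e x - 1)) / N) atTop (nhds 0) :=
    tendsto_const_div_atTop_nhds_zero_nat _
  apply squeeze_zero (fun N => by positivity) ?_ h0
  intro N
  rcases Nat.eq_zero_or_pos N with rfl | hN
  · simp
  · have hNpos : (0:ℝ) < N := by exact_mod_cast hN
    have := geom_bound x c hx N
    gcongr

lemma quad_weyl (A B C : ℝ) (hA : ∀ d : ℤ, d ≠ 0 → e (2 * A * d) ≠ 1) :
    Tendsto (fun N : ℕ => Complex.abs (∑ s ∈ range N, e (A * s ^ 2 + B * s + C)) / N)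
      atTop (nhds 0) := by
  set a : ℕ → ℂ := fun s => e (A * s ^ 2 + B * s + C) with ha
  have habs : ∀ s, Complex.abs (a s) = 1 := fun s => abs_e _
  have key : ∀ (s j j' : ℕ), a (s + j) * (starRingEnd ℂ) (a (s + j')) =
      e ((s:ℝ) * (2 * A * ((j:ℝ) - (j':ℝ))) + (A * ((j:ℝ)^2 - (j':ℝ)^2) + B * ((j:ℝ) - (j':ℝ)))) := by
    intro s j j'
    rw [ha]
    dsimp only
    rw [e_mul_conj]
    congr 1
    push_cast
    ring
  rw [Metric.tendsto_atTop]
  intro ε hε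
  obtain ⟨H, hH1, hHε⟩ : ∃ H : ℕ, 1 ≤ H ∧ (1:ℝ)/H ≤ ε^2/16 := by
    obtain ⟨H, hH⟩ := exists_nat_gt (16/ε^2)
    refine ⟨max H 1, le_max_right _ _, ?_⟩
    have hM1 : (0:ℝ) < (max H 1 : ℕ) := by
      have : (1:ℕ) ≤ max H 1 := le_max_right _ _
      exact_mod_cast Nat.lt_of_lt_of_le Nat.zero_lt_one this
    have h1 : 16/ε^2 < ((max H 1 : ℕ) : ℝ) := by
      refine hH.trans_le ?_
      exact_mod_cast le_max_left H 1
    have hεsq : (0:ℝ) < ε^2 := by positivity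
    have h2 : 16 < ((max H 1 : ℕ) : ℝ) * ε^2 := (div_lt_iff₀ hεsq).mp h1
    rw [div_le_div_iff₀ hM1 (by norm_num : (0:ℝ) < 16)]
    nlinarith
  set CH : ℝ := ∑ j ∈ range H, ∑ j' ∈ range H,
      (if j = j' then 0 else 2 / Complex.abs (e (2 * A * ((j:ℝ) - (j':ℝ))) - 1)) with hCH
  have hCH0 : 0 ≤ CH := by
    apply Finset.sum_nonneg; intro j _; apply Finset.sum_nonneg; intro j' _
    split <;> positivity
  have main : ∀ N : ℕ, 1 ≤ N →
      Complex.abs (∑ s ∈ range N, a s) / N ≤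
        Real.sqrt (1/H + CH/(H^2 * N)) + 2 * H / N := by
    intro N hN
    set S : ℂ := ∑ s ∈ range N, a s with hS
    set b : ℕ → ℂ := fun s => ∑ j ∈ range H, a (s + j) with hb
    have hNpos : (0:ℝ) < N := by exact_mod_cast hN
    have hHpos : (0:ℝ) < H := by exact_mod_cast hH1
    -- Step 1
    have step1 : Complex.abs (∑ s ∈ range N, b s - (H:ℂ) * S) ≤ 2 * H^2 := by
      have swap : ∑ s ∈ range N, b s = ∑ j ∈ range H, ∑ s ∈ range N, a (s + j) := by
        rw [hb]; exact Finset.sum_comm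
      have hHS : (H:ℂ) * S = ∑ _j ∈ range H, S := by
        rw [Finset.sum_const, card_range, nsmul_eq_mul]
      rw [swap, hHS, ← Finset.sum_sub_distrib]
      refine (abs_sum_le' _ _).trans ?_
      have hterm : ∀ j ∈ range H,
          Complex.abs ((∑ s ∈ range N, a (s + j)) - S) ≤ 2 * H := by
        intro j hj
        have hIco : ∑ s ∈ range N, a (s + j) = ∑ t ∈ Finset.Ico j (N + j), a t := by
          rw [Finset.sum_Ico_eq_sum_range]
          simp only [Nat.add_sub_cancel]
          exact Finset.sum_congr rfl fun s _ => by rw [Nat.add_comm]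
        have hsplit1 : ∑ t ∈ Finset.Ico 0 j, a t + ∑ t ∈ Finset.Ico j (N + j), a t
            = ∑ t ∈ Finset.Ico 0 (N + j), a t :=
          Finset.sum_Ico_consecutive _ (Nat.zero_le _) (Nat.le_add_left _ _)
        have hsplit2 : ∑ t ∈ Finset.Ico 0 N, a t + ∑ t ∈ Finset.Ico N (N + j), a t
            = ∑ t ∈ Finset.Ico 0 (N + j), a t :=
          Finset.sum_Ico_consecutive _ (Nat.zero_le _) (Nat.le_add_right _ _)
        have hS' : S = ∑ t ∈ Finset.Ico 0 N, a t := by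
          rw [hS, Finset.range_eq_Ico]
        have hdiff : (∑ s ∈ range N, a (s + j)) - S
            = ∑ t ∈ Finset.Ico N (N + j), a t - ∑ t ∈ Finset.Ico 0 j, a t := by
          rw [hIco, hS']
          linear_combination hsplit1.trans hsplit2.symm
        rw [hdiff]
        have hbound : ∀ (u v : ℕ), Complex.abs (∑ t ∈ Finset.Ico u (u + v), a t) ≤ v := by
          intro u v
          refine (abs_sum_le' _ _).trans ?_
          rw [Finset.sum_congr rfl (fun t _ => habs t), Finset.sum_const, Nat.card_Ico]
          simp
        have h1 := hbound N j
        have h2 : Complex.abs (∑ t ∈ Finset.Ico 0 j, a t) ≤ j := by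
          simpa using hbound 0 j
        have hj' : (j:ℝ) ≤ H := by exact_mod_cast (Finset.mem_range.mp hj).le
        calc Complex.abs (∑ t ∈ Finset.Ico N (N + j), a t - ∑ t ∈ Finset.Ico 0 j, a t)
            ≤ Complex.abs (∑ t ∈ Finset.Ico N (N + j), a t)
              + Complex.abs (∑ t ∈ Finset.Ico 0 j, a t) := Complex.abs.sub_le_add _ _
          _ ≤ (j:ℝ) + j := add_le_add h1 h2
          _ ≤ 2 * H := by linarith
      calc ∑ j ∈ range H, Complex.abs ((∑ s ∈ range N, a (s + j)) - S)
          ≤ ∑ _j ∈ range H, (2 * (H:ℝ)) := Finset.sum_le_sum hterm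
        _ = 2 * H^2 := by rw [Finset.sum_const, card_range, nsmul_eq_mul]; ring
    -- Step 2 : Cauchy-Schwarz
    have step2 : (∑ s ∈ range N, Complex.abs (b s))^2
        ≤ N * ∑ s ∈ range N, (Complex.abs (b s))^2 := by
      have := Finset.sum_mul_sq_le_sq_mul_sq (range N) (fun _ => (1:ℝ))
        (fun s => Complex.abs (b s))
      simpa [card_range] using this
    -- Step 3
    have step3 : ∑ s ∈ range N, (Complex.abs (b s))^2 ≤ N * H + CH := by
      have h1 : ∀ s, ((Complex.abs (b s) : ℂ))^2 = b s * (starRingEnd ℂ) (b s) := by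
        intro s; rw [Complex.mul_conj]; norm_cast; exact Complex.sq_abs _
      have hexp : ((∑ s ∈ range N, (Complex.abs (b s))^2 : ℝ) : ℂ)
          = ∑ j ∈ range H, ∑ j' ∈ range H, ∑ s ∈ range N,
              a (s + j) * (starRingEnd ℂ) (a (s + j')) := by
        push_cast
        rw [Finset.sum_congr rfl fun s _ => h1 s]
        calc ∑ s ∈ range N, b s * (starRingEnd ℂ) (b s)
            = ∑ s ∈ range N, ∑ j ∈ range H, ∑ j' ∈ range H,
                a (s + j) * (starRingEnd ℂ) (a (s + j')) := by
              apply Finset.sum_congr rfl; intro s _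
              rw [hb]; dsimp only
              rw [map_sum, Finset.sum_mul_sum]
          _ = ∑ j ∈ range H, ∑ j' ∈ range H, ∑ s ∈ range N,
                a (s + j) * (starRingEnd ℂ) (a (s + j')) := by
              rw [Finset.sum_comm]
              exact Finset.sum_congr rfl fun j _ => Finset.sum_comm
      have habs2 : ∑ s ∈ range N, (Complex.abs (b s))^2
          = Complex.abs (((∑ s ∈ range N, (Complex.abs (b s))^2 : ℝ) : ℂ)) := by
        rw [Complex.abs_ofReal, abs_of_nonneg (by positivity)]
      rw [habs2, hexp]
      refine (abs_sum_le' _ _).trans ?_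
      have hTbound : ∀ j ∈ range H, ∀ j' ∈ range H,
          Complex.abs (∑ s ∈ range N, a (s + j) * (starRingEnd ℂ) (a (s + j')))
          ≤ (if j = j' then (N:ℝ) else 2 / Complex.abs (e (2 * A * ((j:ℝ) - (j':ℝ))) - 1)) := by
        intro j _ j' _
        by_cases hjj : j = j'
        · subst hjj
          simp only [if_pos rfl]
          refine (abs_sum_le' _ _).trans ?_
          have : ∀ s, Complex.abs (a (s + j) * (starRingEnd ℂ) (a (s + j))) = 1 := by
            intro s; rw [map_mul, Complex.abs_conj, habs]; norm_num
          rw [Finset.sum_congr rfl fun s _ => this s, Finset.sum_const, card_range]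
          simp
        · simp only [if_neg hjj]
          have hd : ((j:ℤ) - (j':ℤ)) ≠ 0 := by
            intro h; apply hjj; omega
          have hne : e (2 * A * ((j:ℝ) - (j':ℝ))) ≠ 1 := by
            have := hA ((j:ℤ) - (j':ℤ)) hd
            convert this using 3
            push_cast; ring
          have := geom_bound (2 * A * ((j:ℝ) - (j':ℝ)))
            (A * ((j:ℝ)^2 - (j':ℝ)^2) + B * ((j:ℝ) - (j':ℝ))) hne N
          calc Complex.abs (∑ s ∈ range N, a (s + j) * (starRingEnd ℂ) (a (s + j')))
              = Complex.abs (∑ s ∈ range N,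
                  e ((s:ℝ) * (2 * A * ((j:ℝ) - (j':ℝ)))
                    + (A * ((j:ℝ)^2 - (j':ℝ)^2) + B * ((j:ℝ) - (j':ℝ))))) := by
                rw [Finset.sum_congr rfl fun s _ => key s j j']
            _ ≤ _ := this
      calc ∑ j ∈ range H, Complex.abs (∑ j' ∈ range H, ∑ s ∈ range N,
              a (s + j) * (starRingEnd ℂ) (a (s + j')))
          ≤ ∑ j ∈ range H, ∑ j' ∈ range H, Complex.abs (∑ s ∈ range N,
              a (s + j) * (starRingEnd ℂ) (a (s + j'))) :=
            Finset.sum_le_sum fun j _ => abs_sum_le' _ _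
        _ ≤ ∑ j ∈ range H, ∑ j' ∈ range H,
              (if j = j' then (N:ℝ) else 2 / Complex.abs (e (2 * A * ((j:ℝ) - (j':ℝ))) - 1)) :=
            Finset.sum_le_sum fun j hj => Finset.sum_le_sum fun j' hj' => hTbound j hj j' hj'
        _ = N * H + CH := by
            have hsplitite : ∀ (j j' : ℕ),
                (if j = j' then (N:ℝ) else 2 / Complex.abs (e (2 * A * ((j:ℝ) - (j':ℝ))) - 1))
                = (if j = j' then (N:ℝ) else 0)
                  + (if j = j' then 0 else 2 / Complex.abs (e (2 * A * ((j:ℝ) - (j':ℝ))) - 1)) := by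
              intro j j'; split <;> simp
            rw [Finset.sum_congr rfl fun j _ => Finset.sum_congr rfl fun j' _ => hsplitite j j']
            rw [Finset.sum_congr rfl fun (j : ℕ) (_ : j ∈ range H) =>
              (Finset.sum_add_distrib (s := range H))]
            rw [Finset.sum_add_distrib, ← hCH]
            congr 1
            have : ∀ j ∈ range H, (∑ j' ∈ range H, if j = j' then (N:ℝ) else 0) = N := by
              intro j hj
              rw [Finset.sum_ite_eq]
              simp [hj]
            rw [Finset.sum_congr rfl this, Finset.sum_const, card_range, nsmul_eq_mul]
            ring
    -- Step 4
    have step4 : (H:ℝ) * Complex.abs S ≤ Real.sqrt (N * (N * H + CH)) + 2 * H^2 := by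
      have h1 : Complex.abs ((H:ℂ) * S) ≤ Complex.abs (∑ s ∈ range N, b s) + 2 * H^2 := by
        have hrw : (H:ℂ) * S = (∑ s ∈ range N, b s) - ((∑ s ∈ range N, b s) - (H:ℂ) * S) := by
          ring
        rw [hrw]
        exact (Complex.abs.sub_le_add _ _).trans (by linarith [step1])
      have h2 : Complex.abs (∑ s ∈ range N, b s) ≤ ∑ s ∈ range N, Complex.abs (b s) :=
        abs_sum_le' _ _
      have h3 : ∑ s ∈ range N, Complex.abs (b s) ≤ Real.sqrt (N * (N * H + CH)) := by
        have hnn : 0 ≤ ∑ s ∈ range N, Complex.abs (b s) := by positivity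
        rw [← Real.sqrt_sq hnn]
        apply Real.sqrt_le_sqrt
        calc (∑ s ∈ range N, Complex.abs (b s))^2
            ≤ N * ∑ s ∈ range N, (Complex.abs (b s))^2 := step2
          _ ≤ N * (N * H + CH) := by
              apply mul_le_mul_of_nonneg_left step3 (by positivity)
      have habsHS : Complex.abs ((H:ℂ) * S) = H * Complex.abs S := by
        rw [map_mul, Complex.abs_natCast]
      linarith
    -- Step 5
    have hsqrt : Real.sqrt (N * (N * H + CH)) / (H * N)
        = Real.sqrt (1/H + CH/(H^2 * N)) := by
      have h1 : (H:ℝ) * N = Real.sqrt (((H:ℝ) * N)^2) := (Real.sqrt_sq (by positivity)).symm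
      rw [h1, ← Real.sqrt_div (by positivity)]
      congr 1
      field_simp
    have h5 : Complex.abs S / N = ((H:ℝ) * Complex.abs S) / (H * N) := by
      field_simp
    rw [h5]
    calc ((H:ℝ) * Complex.abs S) / (H * N)
        ≤ (Real.sqrt (N * (N * H + CH)) + 2 * H^2) / (H * N) := by
          apply div_le_div_of_nonneg_right step4 (by positivity) |>.trans_eq rfl
      _ = Real.sqrt (N * (N * H + CH)) / (H * N) + (2 * H^2) / (H * N) := add_div _ _ _
      _ = Real.sqrt (1/H + CH/(H^2 * N)) + 2 * H / N := by
          rw [hsqrt]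
          congr 1
          field_simp
  -- choose N₀ and finish
  obtain ⟨N₀, hN₀⟩ := exists_nat_gt (max 1 (max (16 * CH / (ε^2 * (H:ℝ)^2)) (16 * H / ε)))
  refine ⟨N₀, fun N hN => ?_⟩
  have hNR : (max 1 (max (16 * CH / (ε^2 * (H:ℝ)^2)) (16 * H / ε))) < (N:ℝ) := by
    refine hN₀.trans_le ?_
    exact_mod_cast hN
  have hN1R : (1:ℝ) < N := lt_of_le_of_lt (le_max_left _ _) hNR
  have hN1 : 1 ≤ N := by exact_mod_cast hN1R.le
  have hNpos : (0:ℝ) < N := by linarith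
  have hHpos : (0:ℝ) < H := by exact_mod_cast hH1
  rw [Real.dist_eq, sub_zero, abs_of_nonneg (by positivity)]
  have hmain := main N hN1
  have hCHN : CH/((H:ℝ)^2 * N) ≤ ε^2/16 := by
    have hx : 16 * CH / (ε^2 * (H:ℝ)^2) < N :=
      lt_of_le_of_lt (le_max_left _ _) (lt_of_le_of_lt (le_max_right _ _) hNR)
    have := (div_lt_iff₀ (by positivity : (0:ℝ) < ε^2 * (H:ℝ)^2)).mp hx
    rw [div_le_div_iff₀ (by positivity) (by norm_num : (0:ℝ) < 16)]
    nlinarith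
  have h2HN : 2 * (H:ℝ) / N < ε/2 := by
    have hx : 16 * (H:ℝ) / ε < N :=
      lt_of_le_of_lt (le_max_right _ _) (lt_of_le_of_lt (le_max_right _ _) hNR)
    have := (div_lt_iff₀ (by positivity : (0:ℝ) < ε)).mp hx
    rw [div_lt_div_iff₀ hNpos (by norm_num : (0:ℝ) < 2)]
    nlinarith
  have hsq : Real.sqrt (1/H + CH/((H:ℝ)^2 * N)) ≤ ε/2 := by
    have h1 : 1/(H:ℝ) + CH/((H:ℝ)^2 * N) ≤ (ε/2)^2 := by
      have : (ε/2)^2 = ε^2/4 := by ring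
      rw [this]
      calc 1/(H:ℝ) + CH/((H:ℝ)^2 * N) ≤ ε^2/16 + ε^2/16 := add_le_add hHε hCHN
        _ ≤ ε^2/4 := by nlinarith
    calc Real.sqrt (1/H + CH/((H:ℝ)^2 * N)) ≤ Real.sqrt ((ε/2)^2) := Real.sqrt_le_sqrt h1
      _ = ε/2 := Real.sqrt_sq (by positivity)
  calc Complex.abs (∑ s ∈ range N, a s) / N
      ≤ Real.sqrt (1/H + CH/((H:ℝ)^2 * N)) + 2 * H / N := hmain
    _ < ε/2 + ε/2 := by
        apply add_lt_add_of_le_of_lt hsq h2HN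
    _ = ε := by ring


lemma e_sum {κ : Type*} (s : Finset κ) (f : κ → ℝ) :
    e (∑ i ∈ s, f i) = ∏ i ∈ s, e (f i) := by
  classical
  induction s using Finset.induction_on with
  | empty => simp [e_zero]
  | insert _ _ hx ih =>
      rw [Finset.sum_insert hx, Finset.prod_insert hx, ← ih, e_add]

theorem weyl_density {ι : Type*} [Fintype ι] [DecidableEq ι] [Nonempty ι] (y : ℕ → ι → ℝ)
    (hW : ∀ c : ι → ℤ, c ≠ 0 →
      Tendsto (fun N : ℕ => Complex.abs (∑ s ∈ range N, e (∑ i, (c i : ℝ) * y s i)) / N)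
        atTop (nhds 0))
    (ε : ℝ) (hε : 0 < ε) (S₀ : ℕ) :
    ∃ s, S₀ ≤ s ∧ ∀ i, |y s i - round (y s i)| < ε := by
  classical
  by_contra hcon
  push_neg at hcon
  -- every s ≥ S₀ has a bad coordinate
  have hbadpt : ∀ s, S₀ ≤ s → ∃ i, ε ≤ |y s i - round (y s i)| := by
    intro s hs
    obtain ⟨i, hi⟩ := hcon s hs
    exact ⟨i, hi⟩
  set M : ℕ := Fintype.card ι with hM
  have hM1 : 1 ≤ M := Fintype.card_pos
  set K : ℕ := M - 1 with hK
  have hMK : M = K + 1 := by omega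
  -- choose n
  set n : ℕ := ⌈(M:ℝ)/(4*ε^2)⌉₊ + 1 with hn
  have hn1 : 1 ≤ n := by omega
  have hnR : (M:ℝ)/(4*ε^2) < n := by
    have := Nat.le_ceil ((M:ℝ)/(4*ε^2))
    have h2 : ((⌈(M:ℝ)/(4*ε^2)⌉₊ : ℝ)) < n := by
      rw [hn]; push_cast; linarith
    linarith
  have hnpos : (0:ℝ) < n := by positivity
  -- definitions
  set g : ℕ → ι → ℂ := fun s i => ∑ j ∈ range n, e ((j:ℝ) * y s i) with hg
  set G : ℕ → ℂ := fun s => ∏ i : ι, (g s i)^M with hG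
  set F : ℕ → ℝ := fun s => (Complex.abs (G s))^2 with hF
  have hF0 : ∀ s, 0 ≤ F s := fun s => by positivity
  set P : Finset ((ι × Fin M) → ℕ) :=
    Fintype.piFinset (fun _ : ι × Fin M => range n) with hP
  set cP : ((ι × Fin M) → ℕ) → ι → ℕ := fun p i => ∑ ρ : Fin M, p (i, ρ) with hcP
  -- expansion of G
  have hGexp : ∀ s, G s = ∑ p ∈ P, e (∑ i, (cP p i : ℝ) * y s i) := by
    intro s
    have h1 : G s = ∏ z : ι × Fin M, g s z.1 := by
      rw [hG]
      dsimp only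
      rw [Fintype.prod_prod_type]
      apply Finset.prod_congr rfl
      intro i _
      show g s i ^ M = ∏ _ρ : Fin M, g s i
      rw [Finset.prod_const, Finset.card_univ, Fintype.card_fin]
    rw [h1, hg]
    dsimp only
    rw [Finset.prod_univ_sum]
    rw [← hP]
    apply Finset.sum_congr rfl
    intro p _
    rw [← e_sum]
    congr 1
    rw [Fintype.sum_prod_type]
    apply Finset.sum_congr rfl
    intro i _
    rw [hcP]
    push_cast
    rw [Finset.sum_mul]
  -- expansion of F
  have hFexp : ∀ s, ((F s : ℝ) : ℂ)
      = ∑ p ∈ P, ∑ q ∈ P, e (∑ i, ((cP p i : ℝ) - (cP q i : ℝ)) * y s i) := by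
    intro s
    have h1 : ((F s : ℝ) : ℂ) = G s * (starRingEnd ℂ) (G s) := by
      rw [hF]
      dsimp only
      rw [Complex.mul_conj]
      norm_cast
      exact Complex.sq_abs _
    rw [h1, hGexp s, map_sum, Finset.sum_mul_sum]
    apply Finset.sum_congr rfl; intro p _
    apply Finset.sum_congr rfl; intro q _
    rw [e_mul_conj]
    congr 1
    rw [← Finset.sum_sub_distrib]
    apply Finset.sum_congr rfl; intro i _
    ring
  -- the limit of averages
  set A : ℝ := ∑ p ∈ P, ∑ q ∈ P, (if cP p = cP q then (1:ℝ) else 0) with hA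
  have havg : Tendsto (fun N : ℕ => (∑ s ∈ range N, F s) / N) atTop (nhds A) := by
    have hterm : ∀ p ∈ P, ∀ q ∈ P,
        Tendsto (fun N : ℕ => (∑ s ∈ range N,
            e (∑ i, ((cP p i : ℝ) - (cP q i : ℝ)) * y s i)) / N) atTop
          (nhds (if cP p = cP q then (1:ℂ) else 0)) := by
      intro p _ q _
      by_cases hpq : cP p = cP q
      · rw [if_pos hpq]
        have hzero : ∀ s, e (∑ i, ((cP p i : ℝ) - (cP q i : ℝ)) * y s i) = 1 := by
          intro s
          have : (∑ i, ((cP p i : ℝ) - (cP q i : ℝ)) * y s i) = 0 := by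
            apply Finset.sum_eq_zero
            intro i _
            rw [hpq]
            ring
          rw [this, e_zero]
        have : ∀ᶠ N : ℕ in atTop, ((∑ s ∈ range N,
            e (∑ i, ((cP p i : ℝ) - (cP q i : ℝ)) * y s i)) / N : ℂ) = 1 := by
          filter_upwards [eventually_ge_atTop 1] with N hN
          rw [Finset.sum_congr rfl fun s _ => hzero s, Finset.sum_const, card_range,
            nsmul_eq_mul, mul_one]
          have : (N:ℂ) ≠ 0 := Nat.cast_ne_zero.mpr (by omega)
          field_simp
        exact Tendsto.congr' (Filter.EventuallyEq.symm this) tendsto_const_nhds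
      · rw [if_neg hpq]
        have hc : (fun i => (cP p i : ℤ) - (cP q i : ℤ)) ≠ 0 := by
          intro h
          apply hpq
          funext i
          have := congrFun h i
          simp only [Pi.zero_apply, sub_eq_zero] at this
          exact_mod_cast this
        have h0 := hW _ hc
        rw [tendsto_zero_iff_norm_tendsto_zero]
        have hph : ∀ s, (∑ i, ((cP p i : ℝ) - (cP q i : ℝ)) * y s i)
            = ∑ i, ((((cP p i : ℤ) - (cP q i : ℤ)) : ℤ) : ℝ) * y s i := by
          intro s; apply Finset.sum_congr rfl; intro i _; push_cast; ring
        have heq : ∀ N : ℕ, ‖((∑ s ∈ range N,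
            e (∑ i, ((cP p i : ℝ) - (cP q i : ℝ)) * y s i)) / N : ℂ)‖
            = Complex.abs (∑ s ∈ range N,
                e (∑ i, ((((cP p i : ℤ) - (cP q i : ℤ)) : ℤ) : ℝ) * y s i)) / N := by
          intro N
          rw [norm_div, Complex.norm_eq_abs, Complex.norm_natCast]
          congr 2
          exact Finset.sum_congr rfl fun s _ => by rw [hph s]
        exact (Tendsto.congr (fun N => (heq N).symm) h0)
    -- sum up
    have hsum : Tendsto (fun N : ℕ => ((∑ s ∈ range N, F s : ℝ) : ℂ) / N) atTop
        (nhds (∑ p ∈ P, ∑ q ∈ P, (if cP p = cP q then (1:ℂ) else 0))) := by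
      have hrw : ∀ N : ℕ, ((∑ s ∈ range N, F s : ℝ) : ℂ) / N
          = ∑ p ∈ P, ∑ q ∈ P, (∑ s ∈ range N,
              e (∑ i, ((cP p i : ℝ) - (cP q i : ℝ)) * y s i)) / N := by
        intro N
        rw [show ((∑ s ∈ range N, F s : ℝ) : ℂ) = ∑ s ∈ range N, ((F s : ℝ) : ℂ) by norm_cast]
        rw [Finset.sum_congr rfl fun s _ => hFexp s]
        rw [Finset.sum_comm]
        rw [Finset.sum_div]
        apply Finset.sum_congr rfl; intro p _
        rw [Finset.sum_comm, Finset.sum_div]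
      have hsum0 : Tendsto (fun N : ℕ => ∑ p ∈ P, ∑ q ∈ P, (∑ s ∈ range N,
          e (∑ i, ((cP p i : ℝ) - (cP q i : ℝ)) * y s i)) / N) atTop
          (nhds (∑ p ∈ P, ∑ q ∈ P, (if cP p = cP q then (1:ℂ) else 0))) := by
        apply tendsto_finset_sum
        intro p hp
        apply tendsto_finset_sum
        intro q hq
        exact hterm p hp q hq
      exact Tendsto.congr (fun N => (hrw N).symm) hsum0
    have hAC : (∑ p ∈ P, ∑ q ∈ P, (if cP p = cP q then (1:ℂ) else 0)) = ((A:ℝ):ℂ) := by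
      rw [hA]
      push_cast
      apply Finset.sum_congr rfl; intro p _
      apply Finset.sum_congr rfl; intro q _
      split <;> simp
    rw [hAC] at hsum
    have hcomp := (Complex.continuous_re.tendsto _).comp hsum
    rw [Complex.ofReal_re] at hcomp
    have hre : ∀ N : ℕ, ((∑ s ∈ range N, F s) / N : ℝ)
        = (((∑ s ∈ range N, F s : ℝ) : ℂ) / N).re := by
      intro N
      rw [show (((∑ s ∈ range N, F s : ℝ)) : ℂ) / (N:ℂ)
          = (((∑ s ∈ range N, F s) / N : ℝ) : ℂ) by push_cast; ring]
      rw [Complex.ofReal_re]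
    exact Tendsto.congr (fun N => (hre N).symm) hcomp
  -- fibers and counting
  set V : Finset (ι → ℕ) := Fintype.piFinset (fun _ : ι => range (M*(n-1)+1)) with hV
  have hmaps : ∀ p ∈ P, cP p ∈ V := by
    intro p hp
    rw [hV, Fintype.mem_piFinset]
    intro i
    rw [Finset.mem_range]
    have hcoord : ∀ ρ : Fin M, p (i,ρ) ≤ n - 1 := by
      intro ρ
      have := (Fintype.mem_piFinset.mp hp) (i,ρ)
      rw [Finset.mem_range] at this
      omega
    have : cP p i ≤ M*(n-1) := by
      rw [hcP]
      calc (∑ ρ : Fin M, p (i, ρ)) ≤ ∑ _ρ : Fin M, (n-1) :=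
            Finset.sum_le_sum (fun ρ _ => hcoord ρ)
        _ = M*(n-1) := by
            rw [Finset.sum_const, Finset.card_univ, Fintype.card_fin, smul_eq_mul]
    omega
  set Nv : (ι → ℕ) → ℕ := fun v => (P.filter (fun p => cP p = v)).card with hNv
  have hA_fib : A = ∑ v ∈ V, ((Nv v : ℝ))^2 := by
    have h1 : ∀ p ∈ P, (∑ q ∈ P, if cP p = cP q then (1:ℝ) else 0) = (Nv (cP p) : ℝ) := by
      intro p _
      rw [Finset.sum_boole, hNv]
      congr 2
      apply Finset.filter_congr
      intro q _
      simp [eq_comm]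
    calc A = ∑ p ∈ P, (Nv (cP p) : ℝ) := Finset.sum_congr rfl h1
      _ = ∑ v ∈ V, ∑ p ∈ P.filter (fun p => cP p = v), (Nv (cP p) : ℝ) :=
          (Finset.sum_fiberwise_of_maps_to hmaps _).symm
      _ = ∑ v ∈ V, ((Nv v : ℝ))^2 := by
          apply Finset.sum_congr rfl; intro v _
          rw [Finset.sum_congr rfl (fun p hp => by rw [(Finset.mem_filter.mp hp).2])]
          rw [Finset.sum_const, nsmul_eq_mul]
          show ((Nv v : ℝ)) * (Nv v : ℝ) = ((Nv v : ℝ))^2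
          ring
  have hA0 : 0 ≤ A := by
    rw [hA_fib]; exact Finset.sum_nonneg (fun v _ => sq_nonneg _)
  have hcardP : P.card = n^(M*M) := by
    rw [hP, Fintype.card_piFinset]
    rw [Finset.prod_const, card_range, Finset.card_univ, Fintype.card_prod, Fintype.card_fin,
      ← hM]
  have hsumNv : ∑ v ∈ V, Nv v = P.card := (Finset.card_eq_sum_card_fiberwise hmaps).symm
  have hcardV : V.card = (M*(n-1)+1)^M := by
    rw [hV, Fintype.card_piFinset]
    rw [Finset.prod_const, card_range, Finset.card_univ, ← hM]
  have hCS : ((P.card : ℝ))^2 ≤ (V.card : ℝ) * A := by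
    rw [hA_fib]
    have hcs := Finset.sum_mul_sq_le_sq_mul_sq V (fun _ => (1:ℝ)) (fun v => (Nv v : ℝ))
    simp only [one_pow, one_mul, Finset.sum_const, nsmul_eq_mul, mul_one] at hcs
    have : ((P.card : ℝ)) = ∑ v ∈ V, (Nv v : ℝ) := by
      rw [← hsumNv]; push_cast; rfl
    rw [this]
    exact hcs
  -- pointwise bounds
  have hFprod : ∀ s, F s = ∏ i : ι, (Complex.abs (g s i))^(2*M) := by
    intro s
    rw [hF, hG]
    dsimp only
    rw [map_prod, ← Finset.prod_pow]
    apply Finset.prod_congr rfl; intro i _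
    rw [map_pow, ← pow_mul, mul_comm]
  have habs_g_le : ∀ s i, Complex.abs (g s i) ≤ n := by
    intro s i
    rw [hg]
    dsimp only
    refine (abs_sum_le' _ _).trans ?_
    rw [Finset.sum_congr rfl (fun j _ => abs_e _), Finset.sum_const, card_range, nsmul_eq_mul,
      mul_one]
  set maxF : ℝ := ((n:ℝ)^(2*M))^M with hmaxF
  have hFs_le : ∀ s, F s ≤ maxF := by
    intro s
    rw [hFprod s, hmaxF]
    calc ∏ i : ι, (Complex.abs (g s i))^(2*M) ≤ ∏ _i : ι, ((n:ℝ)^(2*M)) := by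
          apply Finset.prod_le_prod
          · intro i _; positivity
          · intro i _; exact pow_le_pow_left₀ (by positivity) (habs_g_le s i) _
      _ = ((n:ℝ)^(2*M))^M := by
          rw [Finset.prod_const, Finset.card_univ, ← hM]
  set BadB : ℝ := (1/(2*ε))^(2*M) * ((n:ℝ)^(2*M))^K with hBadB
  have hBadB0 : 0 ≤ BadB := by positivity
  have hFbad : ∀ s, S₀ ≤ s → F s ≤ BadB := by
    intro s hs
    obtain ⟨i₀, hi₀⟩ := hbadpt s hs
    have hgi₀ : Complex.abs (g s i₀) ≤ 1/(2*ε) := by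
      rw [hg]
      exact dirichlet_bound hε hi₀ n
    rw [hFprod s, hBadB]
    rw [← Finset.mul_prod_erase Finset.univ _ (Finset.mem_univ i₀)]
    have h1 : (Complex.abs (g s i₀))^(2*M) ≤ (1/(2*ε))^(2*M) :=
      pow_le_pow_left₀ (by positivity) hgi₀ _
    have h2 : ∏ i ∈ Finset.univ.erase i₀, (Complex.abs (g s i))^(2*M)
        ≤ ((n:ℝ)^(2*M))^K := by
      calc ∏ i ∈ Finset.univ.erase i₀, (Complex.abs (g s i))^(2*M)
          ≤ ∏ _i ∈ Finset.univ.erase i₀, ((n:ℝ)^(2*M)) := by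
            apply Finset.prod_le_prod
            · intro i _; positivity
            · intro i _; exact pow_le_pow_left₀ (by positivity) (habs_g_le s i) _
        _ = ((n:ℝ)^(2*M))^K := by
            rw [Finset.prod_const, Finset.card_erase_of_mem (Finset.mem_univ i₀),
              Finset.card_univ, ← hM, ← hK]
    have h3 : (0:ℝ) ≤ ∏ i ∈ Finset.univ.erase i₀, (Complex.abs (g s i))^(2*M) :=
      Finset.prod_nonneg (fun i _ => by positivity)
    have h4 : (0:ℝ) ≤ (1/(2*ε))^(2*M) := by positivity
    exact mul_le_mul h1 h2 h3 h4
  -- A ≤ BadB via limit comparison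
  have hAle : A ≤ BadB := by
    have hrhs : Tendsto (fun N : ℕ => (S₀ : ℝ) * maxF / N + BadB) atTop (nhds (0 + BadB)) := by
      exact Tendsto.add (tendsto_const_div_atTop_nhds_zero_nat _) tendsto_const_nhds
    rw [zero_add] at hrhs
    apply le_of_tendsto_of_tendsto' havg hrhs
    intro N
    rcases Nat.eq_zero_or_pos N with rfl | hNpos'
    · simp [hBadB0]
    have hNR' : (0:ℝ) < N := by exact_mod_cast hNpos'
    rcases le_or_gt N S₀ with hNS | hNS
    · -- N ≤ S₀ : crude bound
      have : (∑ s ∈ range N, F s) ≤ (S₀ : ℝ) * maxF := by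
        calc (∑ s ∈ range N, F s) ≤ ∑ _s ∈ range N, maxF :=
              Finset.sum_le_sum (fun s _ => hFs_le s)
          _ = N * maxF := by rw [Finset.sum_const, card_range, nsmul_eq_mul]
          _ ≤ S₀ * maxF := by
              have h0 : (0:ℝ) ≤ maxF := le_trans (hF0 0) (hFs_le 0)
              have : (N:ℝ) ≤ S₀ := by exact_mod_cast hNS
              nlinarith
      calc (∑ s ∈ range N, F s) / N ≤ ((S₀:ℝ) * maxF) / N := by gcongr
        _ ≤ (S₀:ℝ) * maxF / N + BadB := by linarith
    · -- S₀ < N : split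
      have hsplit : (∑ s ∈ range S₀, F s) + (∑ s ∈ Finset.Ico S₀ N, F s)
          = ∑ s ∈ range N, F s := Finset.sum_range_add_sum_Ico _ hNS.le
      have hb1 : (∑ s ∈ range S₀, F s) ≤ (S₀:ℝ) * maxF := by
        calc (∑ s ∈ range S₀, F s) ≤ ∑ _s ∈ range S₀, maxF :=
              Finset.sum_le_sum (fun s _ => hFs_le s)
          _ = S₀ * maxF := by rw [Finset.sum_const, card_range, nsmul_eq_mul]
      have hb2 : (∑ s ∈ Finset.Ico S₀ N, F s) ≤ (N:ℝ) * BadB := by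
        calc (∑ s ∈ Finset.Ico S₀ N, F s) ≤ ∑ _s ∈ Finset.Ico S₀ N, BadB :=
              Finset.sum_le_sum (fun s hs => hFbad s (Finset.mem_Ico.mp hs).1)
          _ = (N - S₀ : ℕ) * BadB := by rw [Finset.sum_const, Nat.card_Ico, nsmul_eq_mul]
          _ ≤ (N:ℝ) * BadB := by
              have hle : ((N - S₀ : ℕ) : ℝ) ≤ N := by
                have : N - S₀ ≤ N := Nat.sub_le _ _
                exact_mod_cast this
              exact mul_le_mul_of_nonneg_right hle hBadB0
      have hsum_le : (∑ s ∈ range N, F s) ≤ (S₀:ℝ) * maxF + (N:ℝ) * BadB := by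
        rw [← hsplit]; linarith [hb1, hb2]
      calc (∑ s ∈ range N, F s) / N ≤ ((S₀:ℝ) * maxF + (N:ℝ) * BadB) / N := by gcongr
        _ = (S₀:ℝ) * maxF / N + BadB := by field_simp
  -- numeric contradiction
  have hABad : BadB < A := by
    have hcardV_le : ((V.card : ℝ)) ≤ ((M*n : ℕ) : ℝ)^M := by
      rw [hcardV]
      have h1 : (M*(n-1)+1) ≤ M*n := by
        have h2 : n - 1 + 1 = n := by omega
        calc M*(n-1)+1 ≤ M*(n-1)+M := Nat.add_le_add_left hM1 _
          _ = M*(n-1+1) := by ring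
          _ = M*n := by rw [h2]
      have := Nat.pow_le_pow_left h1 M
      exact_mod_cast this
    have hkey : (1/(2*ε))^(2*M) * ((M:ℝ))^M < (n:ℝ)^M := by
      have hb : ((1:ℝ)/(2*ε))^2 * M = (M:ℝ)/(4*ε^2) := by
        have h2ε : (2*ε)^2 = 4*ε^2 := by ring
        rw [div_pow, one_pow, h2ε, div_mul_eq_mul_div, one_mul]
      have h1 : (1/(2*ε))^(2*M) * ((M:ℝ))^M = ((M:ℝ)/(4*ε^2))^M := by
        rw [pow_mul, ← mul_pow, hb]
      rw [h1]
      exact pow_lt_pow_left₀ hnR (by positivity) (Nat.one_le_iff_ne_zero.mp hM1)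
    have hex : 2*M*M = 2*M*K + M + M := by rw [hMK]; ring
    have hineq : BadB * (V.card : ℝ) < ((P.card : ℝ))^2 := by
      have hPr : ((P.card : ℝ))^2 = (n:ℝ)^(2*M*K) * (n:ℝ)^M * (n:ℝ)^M := by
        rw [hcardP]
        push_cast
        rw [← pow_mul, ← pow_add, ← pow_add]
        congr 1
        rw [hMK]; ring
      have hBr : BadB * (V.card : ℝ) ≤ ((1/(2*ε))^(2*M) * ((M:ℝ))^M * (n:ℝ)^M) * (n:ℝ)^(2*M*K) := by
        rw [hBadB]
        have : ((n:ℝ)^(2*M))^K = (n:ℝ)^(2*M*K) := by rw [← pow_mul]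
        rw [this]
        have hMn : ((M*n : ℕ) : ℝ)^M = ((M:ℝ))^M * (n:ℝ)^M := by
          push_cast; rw [mul_pow]
        calc (1/(2*ε))^(2*M) * (n:ℝ)^(2*M*K) * (V.card : ℝ)
            ≤ (1/(2*ε))^(2*M) * (n:ℝ)^(2*M*K) * (((M*n : ℕ) : ℝ))^M := by
              apply mul_le_mul_of_nonneg_left hcardV_le (by positivity)
          _ = ((1/(2*ε))^(2*M) * ((M:ℝ))^M * (n:ℝ)^M) * (n:ℝ)^(2*M*K) := by
              rw [hMn]; ring
      calc BadB * (V.card : ℝ)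
          ≤ ((1/(2*ε))^(2*M) * ((M:ℝ))^M * (n:ℝ)^M) * (n:ℝ)^(2*M*K) := hBr
        _ < ((n:ℝ)^M * (n:ℝ)^M) * (n:ℝ)^(2*M*K) := by
            apply mul_lt_mul_of_pos_right ?_ (by positivity)
            apply mul_lt_mul_of_pos_right hkey (by positivity)
        _ = ((P.card : ℝ))^2 := by rw [hPr]; ring
    have hVpos : (0:ℝ) < (V.card : ℝ) := by
      rw [hcardV]
      positivity
    nlinarith [hCS, hineq]
  linarith


-- AddCircle helpers
lemma coe_zsmul (z : ℤ) (r : ℝ) :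
    ((z • r : ℝ) : AddCircle (1:ℝ)) = z • ((r : ℝ) : AddCircle (1:ℝ)) :=
  map_zsmul (QuotientAddGroup.mk' (AddSubgroup.zmultiples (1:ℝ))) z r

lemma int_coe_eq_zero (k : ℤ) : (((k : ℝ)) : AddCircle (1:ℝ)) = 0 := by
  rw [AddCircle.coe_eq_zero_iff]
  exact ⟨k, by simp⟩

lemma half_ne_zero' : (((1/2 : ℝ)) : AddCircle (1:ℝ)) ≠ 0 := by
  intro h
  rw [AddCircle.coe_eq_zero_iff] at h
  obtain ⟨n, hn⟩ := h
  rw [zsmul_eq_mul, mul_one] at hn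
  have : (2 * n : ℤ) = 1 := by
    have : (2:ℝ) * n = 1 := by rw [hn]; ring
    exact_mod_cast this
  omega

lemma norm_coe_le_abs (x : ℝ) (k : ℤ) :
    ‖((x : ℝ) : AddCircle (1:ℝ))‖ ≤ |x - k| := by
  have h1 : ((x : AddCircle (1:ℝ))) = ((x - k : ℝ) : AddCircle (1:ℝ)) := by
    have : ((x : ℝ) : AddCircle (1:ℝ)) - ((k : ℝ) : AddCircle (1:ℝ))
        = ((x - k : ℝ) : AddCircle (1:ℝ)) := by
      norm_cast
    rw [← this, int_coe_eq_zero, sub_zero]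
  rw [h1]
  have := QuotientAddGroup.norm_mk_le_norm (S := AddSubgroup.zmultiples (1:ℝ)) (m := x - k)
  simpa [Real.norm_eq_abs] using this

lemma key_irrational {m : ℕ} (τ : ℤ →+ (Fin m → AddCircle (1:ℝ)))
    (hτ : DenseRange τ) (a : Fin m → ℝ) (ha : ∀ i, ((a i : ℝ) : AddCircle (1:ℝ)) = τ 1 i)
    (c : Fin m → ℤ) (hc : c ≠ 0) (q : ℤ) (hq : q ≠ 0) (k : ℤ) :
    (q:ℝ) * (∑ i, (c i : ℝ) * a i) ≠ k := by
  intro hk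
  set f : (Fin m → AddCircle (1:ℝ)) → AddCircle (1:ℝ) :=
    fun x => ∑ i, (q * c i) • x i with hf
  have hcont : Continuous f := by
    apply continuous_finset_sum
    intro i _
    exact (continuous_zsmul _).comp (continuous_apply i)
  have hzero : Set.EqOn f (fun _ => 0) (Set.range τ) := by
    rintro _ ⟨N, rfl⟩
    have hτN : τ N = N • τ 1 := by
      rw [← τ.map_zsmul N 1]
      congr 1
      simp
    rw [hf]
    simp only
    rw [hτN]
    have hterm : ∀ i, (q * c i) • ((N • τ 1) i) = (((q * c i * N : ℤ) : ℝ) * a i : ℝ) := by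
      intro i
      have h1 : (N • τ 1) i = N • (τ 1 i) := rfl
      rw [h1, ← ha i, ← coe_zsmul, ← coe_zsmul]
      congr 1
      rw [zsmul_eq_mul, zsmul_eq_mul]
      push_cast
      ring
    rw [Finset.sum_congr rfl (fun i _ => hterm i)]
    have hsum : (∑ i, ((((q * c i * N : ℤ) : ℝ) * a i : ℝ) : AddCircle (1:ℝ)))
        = ((∑ i, ((q * c i * N : ℤ) : ℝ) * a i : ℝ) : AddCircle (1:ℝ)) :=
      (map_sum (QuotientAddGroup.mk' (AddSubgroup.zmultiples (1:ℝ)))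
        (fun i => ((q * c i * N : ℤ) : ℝ) * a i) Finset.univ).symm
    rw [hsum]
    have : (∑ i, ((q * c i * N : ℤ) : ℝ) * a i) = ((N * k : ℤ) : ℝ) := by
      push_cast
      rw [show ∑ i, (q:ℝ) * (c i) * N * a i = (N:ℝ) * ((q:ℝ) * ∑ i, (c i : ℝ) * a i) by
        rw [Finset.mul_sum, Finset.mul_sum]; apply Finset.sum_congr rfl; intro i _; ring]
      rw [hk]
    rw [this, int_coe_eq_zero]
  have hfeq : f = fun _ => 0 :=
    Continuous.ext_on hτ hcont continuous_const hzero
  -- evaluate at a suitable point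
  obtain ⟨i₀, hi₀'⟩ := Function.ne_iff.mp hc
  have hi₀ : c i₀ ≠ 0 := by simpa using hi₀' 
  have hqc : (q * c i₀ : ℤ) ≠ 0 := mul_ne_zero hq hi₀
  set x₀ : Fin m → AddCircle (1:ℝ) :=
    Function.update (0 : Fin m → AddCircle (1:ℝ)) i₀
      (((1/(2 * ((q * c i₀ : ℤ) : ℝ)) : ℝ) : AddCircle (1:ℝ))) with hx₀
  have hfx₀ : f x₀ = (((1/2 : ℝ)) : AddCircle (1:ℝ)) := by
    rw [hf]
    simp only
    rw [Finset.sum_eq_single i₀]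
    · rw [hx₀, Function.update_self, ← coe_zsmul]
      congr 1
      rw [zsmul_eq_mul]
      have : ((q * c i₀ : ℤ) : ℝ) ≠ 0 := by exact_mod_cast hqc
      field_simp
    · intro i _ hne
      rw [hx₀, Function.update_of_ne hne]
      simp
    · intro h
      exact absurd (Finset.mem_univ i₀) h
  have := congrFun hfeq x₀
  rw [hfx₀] at this
  exact half_ne_zero' this


end WeylAux

end WeylMachinery

open WeylAux Finset in
set_option maxHeartbeats 1600000 in
/-- The set of discriminants `x y - z²` over a Bohr-zero non-periodic set of integers is
all of `ℤ`. -/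
theorem discriminants_of_bohrZero_nonperiodic (B : Set ℤ) (hB : IsBohrZeroNonPeriodic B) :
    {D : ℤ | ∃ x ∈ B, ∃ y ∈ B, ∃ z ∈ B, x * y - z ^ 2 = D} = Set.univ := by
  rw [Set.eq_univ_iff_forall]
  intro D
  obtain ⟨m, hm, τ, U, hτ, hUopen, hU0, hBeq⟩ := hB
  haveI hne : Nonempty (Fin m) := ⟨⟨0, by omega⟩⟩
  have ha' : ∀ i, ∃ r : ℝ, ((r : ℝ) : AddCircle (1:ℝ)) = τ 1 i :=
    fun i => QuotientAddGroup.mk_surjective (τ 1 i)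
  choose a ha using ha'
  have hτcoord : ∀ (X : ℤ) (i : Fin m), τ X i = (((X : ℝ) * a i : ℝ) : AddCircle (1:ℝ)) := by
    intro X i
    have h1 : τ X = X • τ 1 := by
      rw [← τ.map_zsmul X 1]
      congr 1
      simp
    rw [h1]
    have h2 : (X • τ 1) i = X • (τ 1 i) := rfl
    rw [h2, ← ha i, ← WeylAux.coe_zsmul]
    congr 1
    rw [zsmul_eq_mul]
  obtain ⟨δ, hδpos, hδball⟩ := Metric.isOpen_iff.mp hUopen 0 hU0
  have hmem : ∀ x : Fin m → AddCircle (1:ℝ), (∀ i, ‖x i‖ < δ) → x ∈ U := by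
    intro x hx
    apply hδball
    rw [Metric.mem_ball, dist_pi_lt_iff hδpos]
    intro i
    rw [show (0 : Fin m → AddCircle (1:ℝ)) i = 0 from rfl, dist_zero_right]
    exact hx i
  set ε : ℝ := δ/5 with hεdef
  have hε : 0 < ε := by positivity
  -- Step A : find w with τ (w² + D) small
  set yA : ℕ → Fin m → ℝ := fun w i => ((w:ℝ)^2 + (D:ℝ)) * a i with hyA
  have hWA : ∀ c : Fin m → ℤ, c ≠ 0 →
      Tendsto (fun N : ℕ => Complex.abs (∑ s ∈ Finset.range N,
        e (∑ i, (c i : ℝ) * yA s i)) / N) atTop (nhds 0) := by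
    intro c hc
    have hph : ∀ s : ℕ, (∑ i, (c i:ℝ) * yA s i)
        = (∑ i, (c i:ℝ) * a i) * (s:ℝ)^2 + 0 * (s:ℝ) + (D:ℝ) * (∑ i, (c i:ℝ) * a i) := by
      intro s
      rw [Finset.sum_mul, Finset.mul_sum]
      rw [show (0:ℝ) * (s:ℝ) = ∑ _i : Fin m, 0 from by
        rw [Finset.sum_const]; simp]
      rw [← Finset.sum_add_distrib, ← Finset.sum_add_distrib]
      apply Finset.sum_congr rfl
      intro i _
      rw [hyA]
      push_cast
      ring
    have hAirr : ∀ d : ℤ, d ≠ 0 → e (2 * (∑ i, (c i:ℝ) * a i) * d) ≠ 1 := by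
      intro d hd h1
      obtain ⟨k, hk⟩ := e_eq_one_iff.mp h1
      refine key_irrational τ hτ a ha c hc (2*d) (by omega) k ?_
      push_cast
      push_cast at hk
      linarith
    have hq := quad_weyl (∑ i, (c i:ℝ) * a i) 0 ((D:ℝ) * (∑ i, (c i:ℝ) * a i)) hAirr
    apply hq.congr
    intro N
    congr 2
    apply Finset.sum_congr rfl
    intro s _
    rw [hph s]
  obtain ⟨w, hwS, hwgood⟩ := weyl_density yA hWA ε hε (D.natAbs + 1)
  set v : ℤ := (w:ℤ)^2 + D with hvdef
  have hv0 : v ≠ 0 := by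
    have h1 : (D.natAbs : ℤ) + 1 ≤ (w:ℤ) := by exact_mod_cast hwS
    have h2 : -((D.natAbs : ℤ)) ≤ D := by
      rw [← Int.abs_eq_natAbs]
      exact neg_abs_le D
    have h3 : (0:ℤ) ≤ (D.natAbs : ℤ) := Int.natCast_nonneg _
    have : 0 < v := by
      rw [hvdef]
      nlinarith
    omega
  -- Step B : find s
  haveI : Nonempty (Fin m ⊕ Fin m) := ⟨Sum.inl ⟨0, by omega⟩⟩
  set yB : ℕ → (Fin m ⊕ Fin m) → ℝ := fun s z =>
    Sum.elim (fun i => ((w:ℝ) + (v:ℝ)*(s:ℝ)) * a i)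
             (fun i => (1 + 2*(w:ℝ)*(s:ℝ) + (v:ℝ)*(s:ℝ)^2) * a i) z with hyB
  have hWB : ∀ c : (Fin m ⊕ Fin m) → ℤ, c ≠ 0 →
      Tendsto (fun N : ℕ => Complex.abs (∑ s ∈ Finset.range N,
        e (∑ z, (c z : ℝ) * yB s z)) / N) atTop (nhds 0) := by
    intro c hc
    set S₁ : ℝ := ∑ i, (c (Sum.inl i) : ℝ) * a i with hS₁
    set S₂ : ℝ := ∑ i, (c (Sum.inr i) : ℝ) * a i with hS₂
    have hph : ∀ s : ℕ, (∑ z, (c z : ℝ) * yB s z)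
        = ((v:ℝ) * S₂) * (s:ℝ)^2 + ((v:ℝ) * S₁ + 2*(w:ℝ)*S₂) * (s:ℝ)
          + ((w:ℝ) * S₁ + S₂) := by
      intro s
      rw [Fintype.sum_sum_type]
      have e1 : ∑ i, (c (Sum.inl i) : ℝ) * yB s (Sum.inl i)
          = ((w:ℝ) + (v:ℝ)*(s:ℝ)) * S₁ := by
        rw [hS₁, Finset.mul_sum]
        apply Finset.sum_congr rfl
        intro i _
        rw [hyB]
        simp only [Sum.elim_inl]
        ring
      have e2 : ∑ i, (c (Sum.inr i) : ℝ) * yB s (Sum.inr i)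
          = (1 + 2*(w:ℝ)*(s:ℝ) + (v:ℝ)*(s:ℝ)^2) * S₂ := by
        rw [hS₂, Finset.mul_sum]
        apply Finset.sum_congr rfl
        intro i _
        rw [hyB]
        simp only [Sum.elim_inr]
        ring
      rw [e1, e2]
      ring
    by_cases hc2 : (fun i => c (Sum.inr i)) = 0
    · have hc1 : (fun i => c (Sum.inl i)) ≠ 0 := by
        intro h
        apply hc
        funext z
        cases z with
        | inl i => exact congrFun h i
        | inr i => exact congrFun hc2 i
      have hS₂0 : S₂ = 0 := by
        rw [hS₂]
        apply Finset.sum_eq_zero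
        intro i _
        have : c (Sum.inr i) = 0 := congrFun hc2 i
        rw [this]
        simp
      have hBne : e ((v:ℝ) * S₁) ≠ 1 := by
        intro h1
        obtain ⟨k, hk⟩ := e_eq_one_iff.mp h1
        exact key_irrational τ hτ a ha _ hc1 v hv0 k hk
      have hl := linear_weyl ((v:ℝ)*S₁) ((w:ℝ) * S₁ + S₂) hBne
      apply hl.congr
      intro N
      congr 2
      apply Finset.sum_congr rfl
      intro s _
      rw [hph s, hS₂0]
      ring
    · have hAirr : ∀ d : ℤ, d ≠ 0 → e (2 * ((v:ℝ) * S₂) * d) ≠ 1 := by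
        intro d hd h1
        obtain ⟨k, hk⟩ := e_eq_one_iff.mp h1
        refine key_irrational τ hτ a ha _ hc2 (2*v*d) (by
          intro h0
          rcases mul_eq_zero.mp h0 with h0 | h0
          · rcases mul_eq_zero.mp h0 with h0 | h0
            · omega
            · exact hv0 h0
          · exact hd h0) k ?_
        push_cast
        push_cast at hk
        linarith
      have hq := quad_weyl ((v:ℝ)*S₂) ((v:ℝ)*S₁ + 2*(w:ℝ)*S₂) ((w:ℝ)*S₁ + S₂) hAirr
      apply hq.congr
      intro N
      congr 2
      apply Finset.sum_congr rfl
      intro s _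
      rw [hph s]
  obtain ⟨s, _, hsgood⟩ := weyl_density yB hWB ε hε 0
  set u : ℤ := (w:ℤ) + v * (s:ℤ) with hudef
  set t : ℤ := 1 + 2*(w:ℤ)*(s:ℤ) + v*(s:ℤ)^2 with htdef
  -- norms
  have hnormv : ∀ i, ‖τ v i‖ < ε := by
    intro i
    rw [hτcoord v i]
    have h1 := hwgood i
    have h2 : ((v:ℤ):ℝ) * a i = yA w i := by
      rw [hyA, hvdef]
      push_cast
      ring
    rw [h2]
    exact lt_of_le_of_lt (norm_coe_le_abs _ (round (yA w i))) h1
  have hnormu : ∀ i, ‖τ u i‖ < ε := by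
    intro i
    rw [hτcoord u i]
    have h1 := hsgood (Sum.inl i)
    have h2 : ((u:ℤ):ℝ) * a i = yB s (Sum.inl i) := by
      rw [hyB, hudef]
      simp only [Sum.elim_inl]
      push_cast
      ring
    rw [h2]
    exact lt_of_le_of_lt (norm_coe_le_abs _ (round (yB s (Sum.inl i)))) h1
  have hnormt : ∀ i, ‖τ t i‖ < ε := by
    intro i
    rw [hτcoord t i]
    have h1 := hsgood (Sum.inr i)
    have h2 : ((t:ℤ):ℝ) * a i = yB s (Sum.inr i) := by
      rw [hyB, htdef]
      simp only [Sum.elim_inr]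
      push_cast
      ring
    rw [h2]
    exact lt_of_le_of_lt (norm_coe_le_abs _ (round (yB s (Sum.inr i)))) h1
  -- memberships
  have hBmem : ∀ X : ℤ, (∀ i, ‖τ X i‖ < δ) → X ∈ B := by
    intro X hX
    rw [hBeq]
    exact hmem _ hX
  have hxB : t ∈ B := by
    apply hBmem
    intro i
    calc ‖τ t i‖ < ε := hnormt i
      _ < δ := by rw [hεdef]; linarith
  have hzB : t + u ∈ B := by
    apply hBmem
    intro i
    have : τ (t + u) i = τ t i + τ u i := by rw [map_add]; rfl
    rw [this]
    calc ‖τ t i + τ u i‖ ≤ ‖τ t i‖ + ‖τ u i‖ := norm_add_le _ _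
      _ < ε + ε := add_lt_add (hnormt i) (hnormu i)
      _ < δ := by rw [hεdef]; linarith
  have hyBmem : t + u + u + v ∈ B := by
    apply hBmem
    intro i
    have : τ (t + u + u + v) i = τ t i + τ u i + τ u i + τ v i := by
      rw [map_add, map_add, map_add]; rfl
    rw [this]
    calc ‖τ t i + τ u i + τ u i + τ v i‖
        ≤ ‖τ t i + τ u i + τ u i‖ + ‖τ v i‖ := norm_add_le _ _
      _ ≤ ‖τ t i + τ u i‖ + ‖τ u i‖ + ‖τ v i‖ := by
          have := norm_add_le (τ t i + τ u i) (τ u i)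
          linarith
      _ ≤ ‖τ t i‖ + ‖τ u i‖ + ‖τ u i‖ + ‖τ v i‖ := by
          have := norm_add_le (τ t i) (τ u i)
          linarith
      _ < ε + ε + ε + ε := by
          have h1 := hnormt i; have h2 := hnormu i; have h3 := hnormv i
          linarith
      _ < δ := by rw [hεdef]; linarith
  refine ⟨t, hxB, t + u + u + v, hyBmem, t + u, hzB, ?_⟩
  rw [htdef, hudef, hvdef]
  ring

end
end

section
/- Let d ≥ 3 and let B_d ∈ SL_d(ℤ) be the block-diagonal matrix whose upper-left 2×2 block is [[1, −1], [−1, 2]] and whose lower-right (d−2)×(d−2) block is the identity (all other entries zero). The linear operator on Mat_d^0(ℝ) given by v ↦ B_d⁻¹ v B_d has characteristic polynomial (X − 1)^{(d−2)² + 1} · (X² − 7X + 1) · (X² − 3X + 1)^{2(d−2)}; in particular its eigenvalues are (7 + 3√5)/2, (3 + √5)/2, 1, (3 − √5)/2, (7 − 3√5)/2 with algebraic multiplicities 1, 2(d−2), (d−2)² + 1, 2(d−2), 1 respectively, so the operator is proximal. -/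
open MeasureTheory Filter Topology Polynomial

noncomputable section

/-- The real vector space of trace-zero matrices, as a submodule. -/
def mat0Submodule (n : Type*) [Fintype n] : Submodule ℝ (Matrix n n ℝ) where
  carrier := {A | Matrix.trace A = 0}
  zero_mem' := by simp
  add_mem' := by
    intro a b ha hb
    simp only [Set.mem_setOf_eq, Matrix.trace_add] at *
    rw [ha, hb, add_zero]
  smul_mem' := by
    intro c a ha
    simp only [Set.mem_setOf_eq, Matrix.trace_smul] at *
    rw [ha, smul_zero]

variable {n : Type*} [Fintype n] [DecidableEq n]

/-- The element of `SL_d(ℝ)` obtained from an element of `SL_d(ℤ)`. -/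
def slCast (g : Matrix.SpecialLinearGroup n ℤ) : Matrix.SpecialLinearGroup n ℝ :=
  Matrix.SpecialLinearGroup.map (Int.castRingHom ℝ) g

theorem adjOp_mem (g : Matrix.SpecialLinearGroup n ℤ) (v : Matrix n n ℝ)
    (hv : v ∈ mat0Submodule n) :
    ((slCast g⁻¹ : Matrix.SpecialLinearGroup n ℝ) : Matrix n n ℝ) * v *
      ((slCast g : Matrix.SpecialLinearGroup n ℝ) : Matrix n n ℝ) ∈ mat0Submodule n := by
  have hv' : Matrix.trace v = 0 := hv
  show Matrix.trace _ = 0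
  rw [Matrix.trace_mul_cycle, ← Matrix.SpecialLinearGroup.coe_mul]
  have : slCast (n := n) g * slCast g⁻¹ = 1 := by
    unfold slCast
    rw [← MonoidHom.map_mul, mul_inv_cancel, MonoidHom.map_one]
  rw [this, Matrix.SpecialLinearGroup.coe_one, one_mul, hv']

/-- The adjoint (conjugation) operator `v ↦ g⁻¹ v g` on trace-zero real matrices,
for `g ∈ SL_d(ℤ)`. -/
def adjOp (g : Matrix.SpecialLinearGroup n ℤ) :
    ↥(mat0Submodule n) →ₗ[ℝ] ↥(mat0Submodule n) where
  toFun v := ⟨((slCast g⁻¹ : Matrix.SpecialLinearGroup n ℝ) : Matrix n n ℝ) * v *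
      ((slCast g : Matrix.SpecialLinearGroup n ℝ) : Matrix n n ℝ),
    adjOp_mem g v.1 v.2⟩
  map_add' v w := by
    ext1
    simp [Matrix.mul_add, Matrix.add_mul]
  map_smul' c v := by
    ext1
    simp [Matrix.mul_smul, Matrix.smul_mul]

/-- A linear operator on a finite-dimensional real vector space is proximal if it has a
unique complex eigenvalue of maximal absolute value, and this eigenvalue has algebraic
multiplicity one. Eigenvalues are the complex roots of the characteristic polynomial. -/
def IsProximal {V : Type*} [AddCommGroup V] [Module ℝ V] [Module.Finite ℝ V] [Module.Free ℝ V]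
    (f : V →ₗ[ℝ] V) : Prop :=
  ∃ lam : ℂ, (f.charpoly.map (algebraMap ℝ ℂ)).IsRoot lam ∧
    (f.charpoly.map (algebraMap ℝ ℂ)).rootMultiplicity lam = 1 ∧
    ∀ mu : ℂ, (f.charpoly.map (algebraMap ℝ ℂ)).IsRoot mu → mu ≠ lam →
      ‖mu‖ < ‖lam‖

/-- The matrix `B_d ∈ SL_d(ℤ)`, `d = 2 + m`: block diagonal with upper-left block
`[[1, -1], [-1, 2]]` and lower-right block the identity. -/
def Bd (m : ℕ) : Matrix.SpecialLinearGroup (Fin 2 ⊕ Fin m) ℤ :=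
  ⟨Matrix.fromBlocks !![1, -1; -1, 2] 0 0 1, by
    rw [Matrix.det_fromBlocks_zero₂₁]
    norm_num [Matrix.det_fin_two_of]⟩


-- ===================== Auxiliary material =====================

section Aux

open Matrix

lemma stdBasis_repr' {R : Type*} [CommRing R] {m n : Type*} [Fintype m] [Fintype n]
    [DecidableEq m] [DecidableEq n] (M : Matrix m n R) (i : m) (j : n) :
    (Matrix.stdBasis R m n).repr M (i, j) = M i j := by
  simp [Matrix.stdBasis, Pi.basis_repr]

lemma toMatrix_stdBasis_apply' {R : Type*} [CommRing R] {m n : Type*} [Fintype m] [Fintype n]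
    [DecidableEq m] [DecidableEq n] (f : Matrix m n R →ₗ[R] Matrix m n R) (p q : m × n) :
    (LinearMap.toMatrix (Matrix.stdBasis R m n) (Matrix.stdBasis R m n) f) p q
      = f (Matrix.single q.1 q.2 1) p.1 p.2 := by
  rw [LinearMap.toMatrix_apply, show (Matrix.stdBasis R m n) q = Matrix.single q.1 q.2 1 by
    rw [← Matrix.stdBasis_eq_single]]
  rw [show p = (p.1, p.2) from rfl, stdBasis_repr']

lemma charpoly_blockDiagonal' {R : Type*} [CommRing R] {ι α : Type*} [Fintype ι] [DecidableEq ι]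
    [Fintype α] [DecidableEq α] (d : ι → Matrix α α R) :
    (Matrix.blockDiagonal d).charpoly = ∏ k, (d k).charpoly := by
  have h : charmatrix (Matrix.blockDiagonal d)
      = Matrix.blockDiagonal fun k => charmatrix (d k) := by
    ext ⟨i, q⟩ ⟨j, r⟩
    by_cases hqr : q = r
    · subst hqr
      by_cases hij : i = j <;>
        simp [charmatrix_apply, Matrix.blockDiagonal_apply, Matrix.diagonal_apply,
          Prod.ext_iff, hij]
    · simp [charmatrix_apply, Matrix.blockDiagonal_apply, Matrix.diagonal_apply,
        Prod.ext_iff, hqr]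
  rw [Matrix.charpoly, h, Matrix.det_blockDiagonal]
  rfl

lemma charpoly_one'' {R : Type*} [CommRing R] {α : Type*} [Fintype α] [DecidableEq α] :
    (1 : Matrix α α R).charpoly = (X - 1) ^ (Fintype.card α) := by
  have h : charmatrix (1 : Matrix α α R) = Matrix.diagonal (fun _ => (X - 1 : R[X])) := by
    ext i j
    by_cases hij : i = j <;> simp [charmatrix_apply, Matrix.one_apply, Matrix.diagonal_apply, hij]
  rw [Matrix.charpoly, h, Matrix.det_diagonal]
  simp

lemma det_fin_four' {R : Type*} [CommRing R] (M : Matrix (Fin 4) (Fin 4) R) : M.det =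
    M 0 0 * (M 1 1 * (M 2 2 * M 3 3 - M 2 3 * M 3 2) - M 1 2 * (M 2 1 * M 3 3 - M 2 3 * M 3 1) + M 1 3 * (M 2 1 * M 3 2 - M 2 2 * M 3 1)) -
    M 0 1 * (M 1 0 * (M 2 2 * M 3 3 - M 2 3 * M 3 2) - M 1 2 * (M 2 0 * M 3 3 - M 2 3 * M 3 0) + M 1 3 * (M 2 0 * M 3 2 - M 2 2 * M 3 0)) +
    M 0 2 * (M 1 0 * (M 2 1 * M 3 3 - M 2 3 * M 3 1) - M 1 1 * (M 2 0 * M 3 3 - M 2 3 * M 3 0) + M 1 3 * (M 2 0 * M 3 1 - M 2 1 * M 3 0)) -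
    M 0 3 * (M 1 0 * (M 2 1 * M 3 2 - M 2 2 * M 3 1) - M 1 1 * (M 2 0 * M 3 2 - M 2 2 * M 3 0) + M 1 2 * (M 2 0 * M 3 1 - M 2 1 * M 3 0)) := by
  rw [Matrix.det_succ_row_zero]
  simp [Fin.sum_univ_succ, Matrix.det_succ_row_zero, Fin.succAbove,
    show (Fin.succ 2 : Fin 4) = 3 from rfl, show (Fin.castSucc 2 : Fin 4) = 2 from rfl,
    show ((1:Fin 4) < 3) = True from by decide, show (Fin.castSucc 1 : Fin 4) = 1 from rfl]
  ring

/-- the 2×2 upper-left block of `B_d`, over `ℝ`. -/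
def Amat : Matrix (Fin 2) (Fin 2) ℝ := !![1,-1;-1,2]
/-- the inverse of `Amat`. -/
def Aimat : Matrix (Fin 2) (Fin 2) ℝ := !![2,1;1,1]

lemma AiA : Aimat * Amat = 1 := by
  ext i j
  fin_cases i <;> fin_cases j <;>
    simp [Aimat, Amat, Matrix.mul_apply, Fin.sum_univ_two, Matrix.one_apply] <;> norm_num

lemma AAi : Amat * Aimat = 1 := by
  ext i j
  fin_cases i <;> fin_cases j <;>
    simp [Aimat, Amat, Matrix.mul_apply, Fin.sum_univ_two, Matrix.one_apply] <;> norm_num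

variable (m : ℕ)

/-- `B_d` over `ℝ`. -/
def Br : Matrix (Fin 2 ⊕ Fin m) (Fin 2 ⊕ Fin m) ℝ := Matrix.fromBlocks Amat 0 0 1
/-- the inverse of `B_d` over `ℝ`. -/
def Bri : Matrix (Fin 2 ⊕ Fin m) (Fin 2 ⊕ Fin m) ℝ := Matrix.fromBlocks Aimat 0 0 1

lemma BriBr : Bri m * Br m = 1 := by
  rw [Bri, Br, Matrix.fromBlocks_multiply]
  simp [AiA, Matrix.fromBlocks_one]

lemma BrBri : Br m * Bri m = 1 := by
  rw [Bri, Br, Matrix.fromBlocks_multiply]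
  simp [AAi, Matrix.fromBlocks_one]

/-- conjugation by `B_d` on all `d × d` real matrices. -/
def Ffull : Matrix (Fin 2 ⊕ Fin m) (Fin 2 ⊕ Fin m) ℝ →ₗ[ℝ]
    Matrix (Fin 2 ⊕ Fin m) (Fin 2 ⊕ Fin m) ℝ where
  toFun v := Bri m * v * Br m
  map_add' p q := by simp [Matrix.mul_add, Matrix.add_mul]
  map_smul' c p := by simp [Matrix.mul_smul, Matrix.smul_mul]

/-- the action on the upper-left block. -/
def g11 : Matrix (Fin 2) (Fin 2) ℝ →ₗ[ℝ] Matrix (Fin 2) (Fin 2) ℝ where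
  toFun p := Aimat * p * Amat
  map_add' p q := by simp [Matrix.mul_add, Matrix.add_mul]
  map_smul' c p := by simp [Matrix.mul_smul, Matrix.smul_mul]

/-- the action on the upper-right block. -/
def g12 : Matrix (Fin 2) (Fin m) ℝ →ₗ[ℝ] Matrix (Fin 2) (Fin m) ℝ where
  toFun q := Aimat * q
  map_add' p q := by simp [Matrix.mul_add]
  map_smul' c p := by simp [Matrix.mul_smul]

/-- the action on the lower-left block. -/
def g21 : Matrix (Fin m) (Fin 2) ℝ →ₗ[ℝ] Matrix (Fin m) (Fin 2) ℝ where
  toFun q := q * Amat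
  map_add' p q := by simp [Matrix.add_mul]
  map_smul' c p := by simp [Matrix.smul_mul]

/-- decomposition of a matrix into its four blocks, as a linear equivalence. -/
def blockEquiv : Matrix (Fin 2 ⊕ Fin m) (Fin 2 ⊕ Fin m) ℝ ≃ₗ[ℝ]
    (Matrix (Fin 2) (Fin 2) ℝ × Matrix (Fin 2) (Fin m) ℝ ×
      Matrix (Fin m) (Fin 2) ℝ × Matrix (Fin m) (Fin m) ℝ) where
  toFun v := (v.toBlocks₁₁, v.toBlocks₁₂, v.toBlocks₂₁, v.toBlocks₂₂)
  invFun x := Matrix.fromBlocks x.1 x.2.1 x.2.2.1 x.2.2.2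
  left_inv v := Matrix.fromBlocks_toBlocks v
  right_inv := by
    rintro ⟨p, q, r, s⟩
    simp [Matrix.toBlocks_fromBlocks₁₁, Matrix.toBlocks_fromBlocks₁₂,
      Matrix.toBlocks_fromBlocks₂₁, Matrix.toBlocks_fromBlocks₂₂]
  map_add' u v := by ext <;> rfl
  map_smul' c v := by ext <;> rfl

lemma conj_Ffull : (blockEquiv m).conj (Ffull m)
    = (g11).prodMap ((g12 m).prodMap ((g21 m).prodMap LinearMap.id)) := by
  apply LinearMap.ext
  rintro ⟨p, q, r, s⟩
  rw [LinearEquiv.conj_apply]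
  show (blockEquiv m) (Ffull m ((blockEquiv m).symm (p, q, r, s))) = _
  have hsymm : (blockEquiv m).symm (p, q, r, s) = Matrix.fromBlocks p q r s := rfl
  rw [hsymm]
  have hF : Ffull m (Matrix.fromBlocks p q r s)
      = Matrix.fromBlocks (Aimat * p * Amat) (Aimat * q) (r * Amat) s := by
    show Bri m * Matrix.fromBlocks p q r s * Br m = _
    rw [Bri, Br, Matrix.fromBlocks_multiply, Matrix.fromBlocks_multiply]
    simp
  rw [hF]
  show (_, _, _, _) = _
  simp [blockEquiv, Matrix.toBlocks_fromBlocks₁₁, Matrix.toBlocks_fromBlocks₁₂,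
    Matrix.toBlocks_fromBlocks₂₁, Matrix.toBlocks_fromBlocks₂₂, g11, g12, g21]

/-- an explicit enumeration of `Fin 2 × Fin 2`. -/
def e4 : (Fin 2 × Fin 2) ≃ Fin 4 where
  toFun p := ![![0,1],![2,3]] p.1 p.2
  invFun := ![(0,0),(0,1),(1,0),(1,1)]
  left_inv := by decide
  right_inv := by decide

lemma charpoly_g11 : (g11).charpoly = (X - 1) ^ 2 * (X ^ 2 - 7 * X + 1) := by
  rw [← LinearMap.charpoly_toMatrix g11 (Matrix.stdBasis ℝ (Fin 2) (Fin 2)),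
    ← Matrix.charpoly_reindex e4]
  have hmat : (Matrix.reindex e4 e4 (LinearMap.toMatrix (Matrix.stdBasis ℝ (Fin 2) (Fin 2))
      (Matrix.stdBasis ℝ (Fin 2) (Fin 2)) g11))
      = !![(2:ℝ),-2,1,-1; -2,4,-1,2; 1,-1,1,-1; -1,2,-1,2] := by
    ext i j
    fin_cases i <;> fin_cases j <;>
      simp [Matrix.reindex_apply, Matrix.submatrix_apply, toMatrix_stdBasis_apply', e4, g11, Amat,
        Aimat, Matrix.mul_apply, Matrix.vecMul, dotProduct, Fin.sum_univ_two,
        Matrix.single] <;> norm_num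
  rw [hmat, Matrix.charpoly, det_fin_four']
  simp [charmatrix_apply, map_ofNat]
  ring

lemma charpoly_Aimat : (Aimat).charpoly = X ^ 2 - 3 * X + 1 := by
  rw [Matrix.charpoly, Matrix.det_fin_two]
  simp [Aimat, charmatrix_apply, map_ofNat]
  ring

lemma charpoly_Amat_t : (Amat)ᵀ.charpoly = X ^ 2 - 3 * X + 1 := by
  have ht : (Amat)ᵀ = Amat := by
    ext i j
    fin_cases i <;> fin_cases j <;> simp [Amat]
  rw [ht, Matrix.charpoly, Matrix.det_fin_two]
  simp [Amat, charmatrix_apply, map_ofNat]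
  ring

lemma charpoly_g12 : (g12 m).charpoly = (X ^ 2 - 3 * X + 1) ^ m := by
  rw [← LinearMap.charpoly_toMatrix (g12 m) (Matrix.stdBasis ℝ (Fin 2) (Fin m))]
  have hmat : (LinearMap.toMatrix (Matrix.stdBasis ℝ (Fin 2) (Fin m))
      (Matrix.stdBasis ℝ (Fin 2) (Fin m)) (g12 m))
      = Matrix.blockDiagonal (fun _ : Fin m => Aimat) := by
    ext ⟨i, q⟩ ⟨j, r⟩
    rw [toMatrix_stdBasis_apply']
    by_cases h : q = r <;>
      simp [g12, Matrix.blockDiagonal_apply, Matrix.mul_apply, Matrix.single, h,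
        Finset.sum_ite_eq, eq_comm]
  rw [hmat, charpoly_blockDiagonal']
  simp [charpoly_Aimat]

lemma charpoly_g21 : (g21 m).charpoly = (X ^ 2 - 3 * X + 1) ^ m := by
  rw [← LinearMap.charpoly_toMatrix (g21 m) (Matrix.stdBasis ℝ (Fin m) (Fin 2)),
    ← Matrix.charpoly_reindex (Equiv.prodComm (Fin m) (Fin 2))]
  have hmat : (Matrix.reindex (Equiv.prodComm (Fin m) (Fin 2)) (Equiv.prodComm (Fin m) (Fin 2))
      (LinearMap.toMatrix (Matrix.stdBasis ℝ (Fin m) (Fin 2))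
        (Matrix.stdBasis ℝ (Fin m) (Fin 2)) (g21 m)))
      = Matrix.blockDiagonal (fun _ : Fin m => (Amat)ᵀ) := by
    ext ⟨i, q⟩ ⟨j, r⟩
    rw [Matrix.reindex_apply, Matrix.submatrix_apply, Equiv.prodComm_symm, Equiv.prodComm_apply,
      Prod.swap_prod_mk, toMatrix_stdBasis_apply']
    by_cases h : q = r <;>
      simp [g21, Matrix.blockDiagonal_apply, Matrix.mul_apply, Matrix.single, h,
        Finset.sum_ite_eq, eq_comm, Matrix.transpose_apply]
  rw [hmat, charpoly_blockDiagonal']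
  simp only [Finset.prod_const, Finset.card_univ, Fintype.card_fin, charpoly_Amat_t]

lemma charpoly_idmm : (LinearMap.id : Matrix (Fin m) (Fin m) ℝ →ₗ[ℝ]
    Matrix (Fin m) (Fin m) ℝ).charpoly = (X - 1) ^ (m * m) := by
  rw [← LinearMap.charpoly_toMatrix LinearMap.id (Matrix.stdBasis ℝ (Fin m) (Fin m)),
    LinearMap.toMatrix_id, charpoly_one'']
  simp [Fintype.card_prod]

lemma charpoly_idR : (LinearMap.id : ℝ →ₗ[ℝ] ℝ).charpoly = X - 1 := by
  rw [← LinearMap.charpoly_toMatrix LinearMap.id (Module.Basis.singleton (Fin 1) ℝ),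
    LinearMap.toMatrix_id, charpoly_one'']
  simp

lemma charpoly_Ffull : (Ffull m).charpoly
    = (X - 1) ^ (m * m + 2) * (X ^ 2 - 7 * X + 1) * (X ^ 2 - 3 * X + 1) ^ (2 * m) := by
  rw [← LinearEquiv.charpoly_conj (blockEquiv m), conj_Ffull, LinearMap.charpoly_prodMap,
    LinearMap.charpoly_prodMap, LinearMap.charpoly_prodMap, charpoly_g11, charpoly_g12,
    charpoly_g21, charpoly_idmm]
  ring

lemma coe_slCast_Bd : ((slCast (Bd m) : Matrix.SpecialLinearGroup (Fin 2 ⊕ Fin m) ℝ)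
    : Matrix (Fin 2 ⊕ Fin m) (Fin 2 ⊕ Fin m) ℝ) = Br m := by
  ext i j
  rcases i with i | i <;> rcases j with j | j <;>
    · rw [slCast, Matrix.SpecialLinearGroup.map_apply_coe, RingHom.mapMatrix_apply, Matrix.map_apply]
      simp only [Bd, Br]
      simp [Matrix.fromBlocks, Amat, Matrix.one_apply, apply_ite]
      try (fin_cases i <;> fin_cases j <;> norm_num)

lemma coe_slCast_Bd_inv : ((slCast ((Bd m)⁻¹) : Matrix.SpecialLinearGroup (Fin 2 ⊕ Fin m) ℝ)
    : Matrix (Fin 2 ⊕ Fin m) (Fin 2 ⊕ Fin m) ℝ) = Bri m := by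
  have h1 : ((slCast ((Bd m)⁻¹)) : Matrix (Fin 2 ⊕ Fin m) (Fin 2 ⊕ Fin m) ℝ)
      * ((slCast (Bd m)) : Matrix (Fin 2 ⊕ Fin m) (Fin 2 ⊕ Fin m) ℝ) = 1 := by
    rw [← Matrix.SpecialLinearGroup.coe_mul]
    have : slCast ((Bd m)⁻¹) * slCast (Bd m) = 1 := by
      unfold slCast
      rw [← MonoidHom.map_mul, inv_mul_cancel, MonoidHom.map_one]
    rw [this, Matrix.SpecialLinearGroup.coe_one]
  calc ((slCast ((Bd m)⁻¹)) : Matrix (Fin 2 ⊕ Fin m) (Fin 2 ⊕ Fin m) ℝ)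
      = ((slCast ((Bd m)⁻¹)) : Matrix (Fin 2 ⊕ Fin m) (Fin 2 ⊕ Fin m) ℝ) * (Br m * Bri m) := by
        rw [BrBri, mul_one]
    _ = Bri m := by rw [← mul_assoc, ← coe_slCast_Bd m, h1, one_mul]

lemma trace_one' : Matrix.trace (1 : Matrix (Fin 2 ⊕ Fin m) (Fin 2 ⊕ Fin m) ℝ) = (m + 2 : ℝ) := by
  rw [Matrix.trace_one]
  simp [Fintype.card_sum]
  ring

lemma card_ne : ((m : ℝ) + 2) ≠ 0 := by positivity

/-- decomposition of a matrix into a trace-zero part and a multiple of the identity. -/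
def traceEquiv : (↥(mat0Submodule (Fin 2 ⊕ Fin m)) × ℝ) ≃ₗ[ℝ]
    Matrix (Fin 2 ⊕ Fin m) (Fin 2 ⊕ Fin m) ℝ where
  toFun x := (x.1 : Matrix (Fin 2 ⊕ Fin m) (Fin 2 ⊕ Fin m) ℝ) + x.2 • 1
  map_add' x y := by
    simp only [Submodule.coe_add, Prod.fst_add, Prod.snd_add, add_smul]
    abel
  map_smul' c x := by
    simp only [Submodule.coe_smul, Prod.smul_fst, Prod.smul_snd, smul_eq_mul, RingHom.id_apply,
      smul_add, smul_smul]
  invFun M := (⟨M - (Matrix.trace M / (m + 2)) • 1, by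
      show Matrix.trace _ = 0
      rw [Matrix.trace_sub, Matrix.trace_smul, trace_one']
      rw [smul_eq_mul, div_mul_cancel₀ _ (card_ne m), sub_self]⟩, Matrix.trace M / (m + 2))
  left_inv := by
    rintro ⟨⟨v, hv⟩, t⟩
    have hv' : Matrix.trace v = 0 := hv
    have hc : ((m : ℝ) + 2) ≠ 0 := card_ne m
    ext : 2
    · simp only [Matrix.trace_add, Matrix.trace_smul, hv', trace_one', zero_add, smul_eq_mul]
      rw [show t * ((m : ℝ) + 2) / ((m : ℝ) + 2) = t from by field_simp]
      abel
    · simp only [Matrix.trace_add, Matrix.trace_smul, hv', trace_one', zero_add, smul_eq_mul]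
      field_simp
  right_inv M := by simp

lemma conj_traceEquiv : (traceEquiv m).conj ((adjOp (Bd m)).prodMap (LinearMap.id : ℝ →ₗ[ℝ] ℝ))
    = Ffull m := by
  have key : ∀ x : (↥(mat0Submodule (Fin 2 ⊕ Fin m)) × ℝ),
      Ffull m (traceEquiv m x) = traceEquiv m (((adjOp (Bd m)).prodMap LinearMap.id) x) := by
    rintro ⟨⟨v, hv⟩, t⟩
    show Bri m * (v + t • 1) * Br m = ((adjOp (Bd m) ⟨v, hv⟩ : Matrix _ _ ℝ)) + t • 1
    have hadj : ((adjOp (Bd m) ⟨v, hv⟩ : Matrix _ _ ℝ)) = Bri m * v * Br m := by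
      show ((slCast ((Bd m)⁻¹)) : Matrix _ _ ℝ) * v * ((slCast (Bd m)) : Matrix _ _ ℝ) = _
      rw [coe_slCast_Bd, coe_slCast_Bd_inv]
    rw [hadj, Matrix.mul_add, Matrix.add_mul, Matrix.mul_smul, Matrix.smul_mul, mul_one, BriBr]
  apply LinearMap.ext
  intro M
  rw [LinearEquiv.conj_apply]
  show (traceEquiv m) (((adjOp (Bd m)).prodMap LinearMap.id) ((traceEquiv m).symm M)) = Ffull m M
  rw [← key, LinearEquiv.apply_symm_apply]

lemma charpoly_adjOp_aux : (adjOp (Bd m)).charpoly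
    = (X - 1) ^ (m ^ 2 + 1) * (X ^ 2 - 7 * X + 1) * (X ^ 2 - 3 * X + 1) ^ (2 * m) := by
  have hX1 : (X - 1 : ℝ[X]) ≠ 0 := by
    have := Polynomial.X_sub_C_ne_zero (1 : ℝ)
    rwa [Polynomial.C_1] at this
  apply mul_right_cancel₀ hX1
  rw [show (adjOp (Bd m)).charpoly * (X - 1)
      = (adjOp (Bd m)).charpoly * (LinearMap.id : ℝ →ₗ[ℝ] ℝ).charpoly from by
    rw [charpoly_idR]]
  rw [← LinearMap.charpoly_prodMap, ← LinearEquiv.charpoly_conj (traceEquiv m),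
    conj_traceEquiv, charpoly_Ffull]
  ring

lemma isProximal_of_charpoly {V : Type*} [AddCommGroup V] [Module ℝ V] [Module.Finite ℝ V]
    [Module.Free ℝ V] (f : V →ₗ[ℝ] V) (k l : ℕ) (hk : k ≠ 0) (hl : l ≠ 0)
    (h : f.charpoly = (X - 1) ^ k * (X ^ 2 - 7 * X + 1) * (X ^ 2 - 3 * X + 1) ^ l) :
    IsProximal f := by
  set s : ℝ := Real.sqrt 5 with hs_def
  have hs0 : 0 ≤ s := Real.sqrt_nonneg 5
  have hs : s ^ 2 = 5 := Real.sq_sqrt (by norm_num)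
  have hs2 : 2 < s := by nlinarith
  have hs3 : s < 3 := by nlinarith
  set a : ℝ := (7 + 3 * s) / 2 with ha_def
  set b : ℝ := (7 - 3 * s) / 2 with hb_def
  set c : ℝ := (3 + s) / 2 with hc_def
  set e : ℝ := (3 - s) / 2 with he_def
  have hq7 : (X ^ 2 - 7 * X + 1 : ℂ[X]) = (X - C (a : ℂ)) * (X - C (b : ℂ)) := by
    have expand : ∀ p q : ℂ, (X - C p) * (X - C q) = X ^ 2 - (C p + C q) * X + C p * C q := by
      intro p q; ring
    rw [expand, ← C_add, ← C_mul]
    have h1 : ((a : ℂ)) + b = 7 := by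
      rw [← Complex.ofReal_add]
      norm_cast
      rw [ha_def, hb_def]; ring
    have h2 : ((a : ℂ)) * b = 1 := by
      rw [← Complex.ofReal_mul]
      norm_cast
      rw [ha_def, hb_def]
      nlinarith [hs]
    rw [h1, h2, _root_.map_one, map_ofNat]
  have hq3 : (X ^ 2 - 3 * X + 1 : ℂ[X]) = (X - C (c : ℂ)) * (X - C (e : ℂ)) := by
    have expand : ∀ p q : ℂ, (X - C p) * (X - C q) = X ^ 2 - (C p + C q) * X + C p * C q := by
      intro p q; ring
    rw [expand, ← C_add, ← C_mul]
    have h1 : ((c : ℂ)) + e = 3 := by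
      rw [← Complex.ofReal_add]; norm_cast; rw [hc_def, he_def]; ring
    have h2 : ((c : ℂ)) * e = 1 := by
      rw [← Complex.ofReal_mul]; norm_cast; rw [hc_def, he_def]; nlinarith [hs]
    rw [h1, h2, _root_.map_one, map_ofNat]
  have hPfac : f.charpoly.map (algebraMap ℝ ℂ)
      = (X - C 1) ^ k * ((X - C (a : ℂ)) * (X - C (b : ℂ)))
        * ((X - C (c : ℂ)) * (X - C (e : ℂ))) ^ l := by
    rw [h]
    simp only [Polynomial.map_mul, Polynomial.map_pow, Polynomial.map_add, Polynomial.map_sub,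
      Polynomial.map_one, Polynomial.map_X, Polynomial.map_ofNat]
    rw [hq7, hq3, _root_.map_one]
  have hab : a ≠ b := by rw [ha_def, hb_def]; intro hh; nlinarith
  have ha1 : a ≠ 1 := by rw [ha_def]; intro hh; nlinarith
  have hac : a ≠ c := by rw [ha_def, hc_def]; intro hh; nlinarith
  have hae : a ≠ e := by rw [ha_def, he_def]; intro hh; nlinarith
  have hapos : 0 < a := by rw [ha_def]; nlinarith
  refine ⟨(a : ℂ), ?_, ?_, ?_⟩
  · rw [hPfac]
    simp [IsRoot]
  · set Q : ℂ[X] := (X - C 1) ^ k * (X - C (b : ℂ))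
      * ((X - C (c : ℂ)) * (X - C (e : ℂ))) ^ l with hQdef
    have hfacQ : f.charpoly.map (algebraMap ℝ ℂ) = (X - C (a : ℂ)) * Q := by
      rw [hPfac, hQdef]; ring
    have hQne : Q ≠ 0 := by
      rw [hQdef]
      refine mul_ne_zero (mul_ne_zero (pow_ne_zero _ (X_sub_C_ne_zero _)) (X_sub_C_ne_zero _))
        (pow_ne_zero _ (mul_ne_zero (X_sub_C_ne_zero _) (X_sub_C_ne_zero _)))
    have hQa : ¬ Q.IsRoot (a : ℂ) := by
      rw [hQdef]
      simp only [IsRoot, eval_mul, eval_pow, eval_sub, eval_X, eval_C, mul_eq_zero,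
        pow_eq_zero_iff hk, pow_eq_zero_iff hl, sub_eq_zero]
      push_neg
      refine ⟨⟨?_, ?_⟩, ?_, ?_⟩ <;> norm_cast
    rw [hfacQ, Polynomial.rootMultiplicity_mul (mul_ne_zero (X_sub_C_ne_zero _) hQne),
      Polynomial.rootMultiplicity_X_sub_C_self, Polynomial.rootMultiplicity_eq_zero hQa]
  · intro mu hroot hne
    rw [hPfac] at hroot
    simp only [IsRoot, eval_mul, eval_pow, eval_sub, eval_X, eval_C, mul_eq_zero,
      pow_eq_zero_iff hk, pow_eq_zero_iff hl, sub_eq_zero] at hroot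
    have habs : ‖(a : ℂ)‖ = a := by
      rw [Complex.norm_real, Real.norm_eq_abs, abs_of_pos hapos]
    rcases hroot with ((rfl | rfl | rfl) | rfl | rfl)
    · rw [habs, norm_one]; nlinarith
    · exact absurd rfl hne
    · rw [habs, Complex.norm_real, Real.norm_eq_abs, hb_def, ha_def, abs_lt]
      constructor <;> nlinarith
    · rw [habs, Complex.norm_real, Real.norm_eq_abs, hc_def, ha_def, abs_lt]
      constructor <;> nlinarith
    · rw [habs, Complex.norm_real, Real.norm_eq_abs, he_def, ha_def, abs_lt]
      constructor <;> nlinarith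

end Aux

/-- **Proposition.** For `d ≥ 3`, conjugation by `B_d` on the trace-zero real `d × d`
matrices has characteristic polynomial
`(X - 1)^{(d-2)² + 1} (X² - 7X + 1)(X² - 3X + 1)^{2(d-2)}`; in particular its eigenvalues
are `(7 ± 3√5)/2`, `(3 ± √5)/2` and `1`, with multiplicities `1, 2(d-2), (d-2)² + 1,
2(d-2), 1`, and it is proximal. -/

theorem charpoly_adjOp_Bd (d : ℕ) (hd : 3 ≤ d) :
    (adjOp (Bd (d - 2))).charpoly =
        (X - 1) ^ ((d - 2) ^ 2 + 1) * (X ^ 2 - 7 * X + 1) *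
          (X ^ 2 - 3 * X + 1) ^ (2 * (d - 2)) ∧
      IsProximal (adjOp (Bd (d - 2))) := by
  have hm : 1 ≤ d - 2 := by omega
  refine ⟨charpoly_adjOp_aux (d - 2), ?_⟩
  exact isProximal_of_charpoly _ ((d - 2) ^ 2 + 1) (2 * (d - 2)) (by omega) (by omega)
    (charpoly_adjOp_aux (d - 2))


end
end

section
/- Let G be a countable abelian group, let τ : G → 𝕋^n (n ≥ 1) be a group homomorphism with dense image, let (F_k) be a Følner sequence in G, and let A ⊆ 𝕋^n be a Jordan measurable set (its topological boundary has Haar measure zero). Then (1/|F_k|) · #{g ∈ F_k : τ(g) ∈ A} → m(A) as k → ∞, where m is the normalized Haar measure on 𝕋^n. -/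
open MeasureTheory Filter Topology Polynomial

noncomputable section

/-- A Følner sequence in an abelian group: a sequence of nonempty finite sets that is
asymptotically invariant under every translation. -/
def IsFolnerSeq {G : Type*} [AddCommGroup G] (F : ℕ → Finset G) : Prop :=
  (∀ k, (F k).Nonempty) ∧
    ∀ g : G, Tendsto
      (fun k => (((F k : Set G) ∩ ((· + g) '' (F k : Set G))).ncard : ℝ) / (F k).card)
      atTop (𝓝 1)

/-- Upper Banach density of a subset of a countable abelian group. -/
def upperBanachDensity {G : Type*} [AddCommGroup G] (B : Set G) : ℝ :=
  sSup {x : ℝ | ∃ F : ℕ → Finset G, IsFolnerSeq F ∧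
    x = Filter.limsup (fun k => (((F k : Set G) ∩ B).ncard : ℝ) / (F k).card) atTop}

namespace FolnerAux

open Complex Submodule Set Function

variable {m : ℕ}

abbrev Tor (m : ℕ) := Fin m → AddCircle (1 : ℝ)

instance : IsProbabilityMeasure (volume : Measure (Tor m)) := by
  constructor
  rw [volume_pi, Measure.pi_univ]
  simp [AddCircle.measure_univ]

/-- Fourier characters on the torus. -/
def tchar (ν : Fin m → ℤ) : C(Tor m, ℂ) :=
  ⟨fun x => ∏ i, fourier (ν i) (x i),
    continuous_finset_prod _ fun i _ =>
      (map_continuous (fourier (ν i))).comp (continuous_apply i)⟩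

lemma tchar_apply (ν : Fin m → ℤ) (x : Tor m) : tchar ν x = ∏ i, fourier (ν i) (x i) := rfl

lemma tchar_norm (ν : Fin m → ℤ) (x : Tor m) : ‖tchar ν x‖ = 1 := by
  rw [tchar_apply, norm_prod]
  exact Finset.prod_eq_one fun i _ => Circle.norm_coe _

lemma fourier_pt_add {T : ℝ} {n : ℤ} (x y : AddCircle T) :
    fourier n (x + y) = fourier n x * fourier n y := by
  simp only [fourier_apply, smul_add, AddCircle.toCircle_add, Circle.coe_mul]

lemma tchar_pt_add (ν : Fin m → ℤ) (x y : Tor m) :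
    tchar ν (x + y) = tchar ν x * tchar ν y := by
  simp only [tchar_apply, Pi.add_apply, fourier_pt_add, Finset.prod_mul_distrib]

lemma integral_fourier_eq_zero {n : ℤ} (hn : n ≠ 0) :
    ∫ x : AddCircle (1 : ℝ), fourier n x = 0 := by
  have key : ∫ x : AddCircle (1 : ℝ),
        fourier n (x + (((1:ℝ) / 2 / (n:ℝ) : ℝ) : AddCircle (1:ℝ))) ∂volume
      = ∫ x : AddCircle (1 : ℝ), fourier n x ∂volume :=
    integral_add_right_eq_self (fun x : AddCircle (1:ℝ) => (fourier n x : ℂ)) _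
  simp_rw [fourier_add_half_inv_index hn one_pos] at key
  rw [integral_neg] at key
  have h2 : (2:ℂ) * (∫ x : AddCircle (1 : ℝ), fourier n x) = 0 := by
    rw [two_mul]; nth_rewrite 1 [← key]; exact neg_add_cancel _
  rcases mul_eq_zero.mp h2 with h | h
  · exact absurd h two_ne_zero
  · exact h

lemma integral_tchar {ν : Fin m → ℤ} (hν : ν ≠ 0) : ∫ x : Tor m, tchar ν x = 0 := by
  have h : ∫ x : Tor m, tchar ν x = ∏ i, ∫ x : AddCircle (1:ℝ), fourier (ν i) x := by
    simp_rw [tchar_apply]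
    exact integral_fintype_prod_eq_prod (ι := Fin m) fun i (x : AddCircle (1:ℝ)) => (fourier (ν i) x : ℂ)
  obtain ⟨i, hi⟩ : ∃ i, ν i ≠ 0 := by
    by_contra hx; push_neg at hx; exact hν (funext hx)
  rw [h]
  exact Finset.prod_eq_zero (Finset.mem_univ i) (integral_fourier_eq_zero hi)

lemma tchar_zero : tchar (0 : Fin m → ℤ) = 1 := by
  ext x; simp [tchar_apply]

lemma tchar_mul (ν μ : Fin m → ℤ) : tchar (ν + μ) = tchar ν * tchar μ := by
  ext x
  simp only [tchar_apply, ContinuousMap.mul_apply, Pi.add_apply, fourier_add,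
    Finset.prod_mul_distrib]

lemma tchar_neg (ν : Fin m → ℤ) : tchar (-ν) = star (tchar ν) := by
  ext x
  simp only [tchar_apply, ContinuousMap.star_apply, Pi.neg_apply, fourier_neg, ← map_prod]
  rfl

def torSubalgebra (m : ℕ) : StarSubalgebra ℂ C(Tor m, ℂ) where
  toSubalgebra := Algebra.adjoin ℂ (range (tchar (m := m)))
  star_mem' := by
    show Algebra.adjoin ℂ (range (tchar (m := m))) ≤
      star (Algebra.adjoin ℂ (range (tchar (m := m))))
    refine Algebra.adjoin_le ?_
    rintro - ⟨ν, rfl⟩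
    exact Algebra.subset_adjoin ⟨-ν, (tchar_neg ν).symm ▸ rfl⟩

theorem torSubalgebra_coe :
    Subalgebra.toSubmodule (torSubalgebra m).toSubalgebra = span ℂ (range (tchar (m := m))) := by
  apply Algebra.adjoin_eq_span_of_subset
  refine Subset.trans ?_ Submodule.subset_span
  intro x hx
  refine Submonoid.closure_induction (fun _ => id) ⟨0, tchar_zero⟩ ?_ hx
  rintro - - - - ⟨ν, rfl⟩ ⟨μ, rfl⟩
  exact ⟨ν + μ, tchar_mul ν μ⟩

theorem torSubalgebra_separatesPoints : (torSubalgebra m).SeparatesPoints := by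
  intro x y hxy
  obtain ⟨i, hi⟩ : ∃ i, x i ≠ y i := by
    by_contra h; push_neg at h; exact hxy (funext h)
  refine ⟨_, ⟨tchar (Pi.single i 1), Algebra.subset_adjoin ⟨_, rfl⟩, rfl⟩, ?_⟩
  have key : ∀ z : Tor m, tchar (Pi.single i 1) z = fourier 1 (z i) := fun z => by
    rw [tchar_apply,
      Finset.prod_eq_single i (fun j _ hj => by rw [Pi.single_eq_of_ne hj]; exact fourier_zero)
        (fun h => absurd (Finset.mem_univ i) h), Pi.single_eq_same]
  dsimp only
  rw [key x, key y, fourier_one, fourier_one]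
  contrapose! hi
  rw [Circle.coe_inj] at hi
  exact AddCircle.injective_toCircle one_ne_zero hi

theorem torSubalgebra_closure_eq_top : (torSubalgebra m).topologicalClosure = ⊤ :=
  ContinuousMap.starSubalgebra_topologicalClosure_eq_top_of_separatesPoints _
    torSubalgebra_separatesPoints

theorem span_tchar_closure_eq_top :
    (span ℂ (range (tchar (m := m)))).topologicalClosure = ⊤ := by
  rw [← torSubalgebra_coe]
  exact congr_arg (Subalgebra.toSubmodule <| StarSubalgebra.toSubalgebra ·)
    torSubalgebra_closure_eq_top

lemma folner_avg_char (G : Type*) [AddCommGroup G] (F : ℕ → Finset G) (hF : IsFolnerSeq F)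
    (φ : G → ℂ) (hφ1 : ∀ g, ‖φ g‖ = 1) (hmul : ∀ g h, φ (g + h) = φ g * φ h)
    (g₀ : G) (hg₀ : φ g₀ ≠ 1) :
    Tendsto (fun k => (∑ g ∈ F k, φ g) / ((F k).card : ℂ)) atTop (𝓝 0) := by
  classical
  set c : ℂ := φ g₀ with hc
  have hc1 : ‖(1 : ℂ) - c‖ ≠ 0 := by
    simpa [sub_eq_zero] using fun h => hg₀ h.symm
  have key : ∀ k, ‖(1 - c) * ((∑ g ∈ F k, φ g) / ((F k).card : ℂ))‖ ≤
      2 * (1 - (((F k : Set G) ∩ ((· + g₀) '' (F k : Set G))).ncard : ℝ) / (F k).card) := by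
    intro k
    set s : Finset G := F k
    set t : Finset G := s.image (· + g₀)
    have hcard : t.card = s.card := Finset.card_image_of_injective _ (add_left_injective g₀)
    have hsum_t : ∑ g ∈ t, φ g = c * ∑ g ∈ s, φ g := by
      rw [Finset.sum_image (fun a _ b _ h => by exact add_left_injective g₀ h)]
      simp_rw [hmul]
      rw [← Finset.sum_mul, mul_comm]
    have hditer : (∑ g ∈ s, φ g) - ∑ g ∈ t, φ g
        = (∑ g ∈ s \ t, φ g) - ∑ g ∈ t \ s, φ g := (Finset.sum_sdiff_sub_sum_sdiff ..).symm
    have hnorm : ‖(∑ g ∈ s, φ g) - ∑ g ∈ t, φ g‖ ≤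
        ((s \ t).card : ℝ) + ((t \ s).card : ℝ) := by
      rw [hditer]
      refine (norm_sub_le _ _).trans (add_le_add ?_ ?_) <;>
      · refine (norm_sum_le _ _).trans ?_
        simp [hφ1]
    have hinter : (((F k : Set G) ∩ ((· + g₀) '' (F k : Set G))).ncard : ℝ)
        = ((s ∩ t).card : ℝ) := by
      congr 1
      rw [← Set.ncard_coe_finset (s ∩ t)]
      congr 1
      simp only [Finset.coe_inter, Finset.coe_image, t, s]
    have hsd1 : ((s \ t).card : ℝ) = (s.card : ℝ) - ((s ∩ t).card : ℝ) := by
      have h1 := Finset.card_sdiff_add_card_inter s t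
      push_cast [← h1]; ring
    have hsd2 : ((t \ s).card : ℝ) = (s.card : ℝ) - ((s ∩ t).card : ℝ) := by
      have h1 := Finset.card_sdiff_add_card_inter t s
      rw [Finset.inter_comm, hcard] at h1
      push_cast [← h1]; ring
    rcases Nat.eq_zero_or_pos s.card with hs0 | hspos
    · simp [hs0, Finset.card_eq_zero.mp hs0]
    have hNpos : (0:ℝ) < (s.card : ℝ) := by exact_mod_cast hspos
    have hmain : ‖(1 - c) * ∑ g ∈ s, φ g‖ ≤ 2 * ((s.card : ℝ) - ((s ∩ t).card : ℝ)) := by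
      have he : (1 - c) * ∑ g ∈ s, φ g = (∑ g ∈ s, φ g) - ∑ g ∈ t, φ g := by
        rw [hsum_t]; ring
      rw [he]
      refine hnorm.trans ?_
      rw [hsd1, hsd2]; ring_nf; exact le_refl _
    have hnormdiv : ‖(1 - c) * ((∑ g ∈ s, φ g) / ((s.card : ℕ) : ℂ))‖
        = ‖(1 - c) * ∑ g ∈ s, φ g‖ / (s.card : ℝ) := by
      rw [← mul_div_assoc, norm_div]
      norm_num
    rw [hinter, hnormdiv, div_le_iff₀ hNpos]
    refine hmain.trans (le_of_eq ?_)
    field_simp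
  have h2 : Tendsto (fun k => 2 * (1 - (((F k : Set G) ∩ ((· + g₀) '' (F k : Set G))).ncard : ℝ)
      / (F k).card)) atTop (𝓝 0) := by
    have h3 := (hF.2 g₀).const_sub 1
    simp only [sub_self] at h3
    simpa using h3.const_mul 2
  have hzero : Tendsto (fun k => ‖(1 - c) * ((∑ g ∈ F k, φ g) / ((F k).card : ℂ))‖)
      atTop (𝓝 0) := squeeze_zero (fun k => norm_nonneg _) key h2
  have heq : (fun k => ‖(∑ g ∈ F k, φ g) / ((F k).card : ℂ)‖)
      = fun k => ‖(1 - c) * ((∑ g ∈ F k, φ g) / ((F k).card : ℂ))‖ / ‖(1:ℂ) - c‖ := by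
    funext k; rw [norm_mul, mul_comm, mul_div_assoc, div_self hc1, mul_one]
  rw [tendsto_zero_iff_norm_tendsto_zero, heq]
  simpa using hzero.div_const ‖(1:ℂ) - c‖

lemma cont_integrable (f : C(Tor m, ℂ)) : Integrable f (volume : Measure (Tor m)) := by
  have := (BoundedContinuousFunction.mkOfCompact f).integrable (μ := (volume : Measure (Tor m)))
  exact this

lemma avg_tendsto_integral {G : Type*} [AddCommGroup G]
    (τ : G →+ Tor m) (hτ : DenseRange τ) (F : ℕ → Finset G) (hF : IsFolnerSeq F)
    (f : C(Tor m, ℂ)) :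
    Tendsto (fun k => (∑ g ∈ F k, f (τ g)) / ((F k).card : ℂ)) atTop (𝓝 (∫ x, f x)) := by
  classical
  set P : C(Tor m, ℂ) → Prop := fun f =>
    Tendsto (fun k => (∑ g ∈ F k, f (τ g)) / ((F k).card : ℂ)) atTop (𝓝 (∫ x, f x)) with hP
  have hcard : ∀ k, ((F k).card : ℂ) ≠ 0 := fun k => by
    exact_mod_cast Nat.cast_ne_zero.mpr (Finset.card_ne_zero_of_mem (hF.1 k).choose_spec)
  -- characters
  have hchar : ∀ ν : Fin m → ℤ, P (tchar ν) := by
    intro ν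
    rcases eq_or_ne ν 0 with rfl | hν
    · rw [hP]
      dsimp only
      have hone : ∀ k, (∑ g ∈ F k, tchar (0 : Fin m → ℤ) (τ g)) / ((F k).card : ℂ) = 1 := by
        intro k
        simp only [tchar_zero, ContinuousMap.one_apply, Finset.sum_const, nsmul_eq_mul, mul_one]
        exact div_self (hcard k)
      have hint : ∫ x : Tor m, tchar (0 : Fin m → ℤ) x = 1 := by
        simp only [tchar_zero, ContinuousMap.one_apply]
        simp [integral_const]
      rw [hint]
      simp only [hone]
      exact tendsto_const_nhds
    · rw [hP]
      dsimp only
      rw [integral_tchar hν]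
      -- find g₀ with tchar ν (τ g₀) ≠ 1
      have hx : ∃ x : Tor m, tchar ν x ≠ 1 := by
        by_contra hall
        push_neg at hall
        have : ∫ x : Tor m, tchar ν x = 1 := by
          simp only [hall]
          simp [integral_const]
        rw [integral_tchar hν] at this
        exact zero_ne_one this
      obtain ⟨x, hx⟩ := hx
      have hU : IsOpen {y : Tor m | tchar ν y ≠ 1} :=
        (isOpen_compl_singleton.preimage (map_continuous (tchar ν)))
      obtain ⟨g₀, hg₀⟩ := hτ.exists_mem_open hU ⟨x, hx⟩
      exact folner_avg_char G F hF (fun g => tchar ν (τ g)) (fun g => tchar_norm ν (τ g))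
        (fun g h => by
          show tchar ν (τ (g + h)) = tchar ν (τ g) * tchar ν (τ h)
          rw [map_add, tchar_pt_add]) g₀ hg₀
  -- span
  have hspan : ∀ f ∈ span ℂ (range (tchar (m := m))), P f := by
    intro f hf
    induction hf using Submodule.span_induction with
    | mem f hf => obtain ⟨ν, rfl⟩ := hf; exact hchar ν
    | zero =>
      rw [hP]
      dsimp only
      simpa using (tendsto_const_nhds : Tendsto (fun _ : ℕ => (0:ℂ)) atTop (𝓝 0))
    | add f g _ _ hf hg =>
      rw [hP]
      dsimp only
      have : ∫ x : Tor m, (f + g) x = (∫ x : Tor m, f x) + ∫ x : Tor m, g x := by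
        simp only [ContinuousMap.add_apply]
        exact integral_add (cont_integrable f) (cont_integrable g)
      rw [this]
      have heq : ∀ k, (∑ g' ∈ F k, (f + g) (τ g')) / ((F k).card : ℂ)
          = (∑ g' ∈ F k, f (τ g')) / ((F k).card : ℂ)
            + (∑ g' ∈ F k, g (τ g')) / ((F k).card : ℂ) := by
        intro k
        rw [← add_div, ← Finset.sum_add_distrib]
        simp [ContinuousMap.add_apply]
      simp only [heq]
      exact hf.add hg
    | smul c f _ hf =>
      rw [hP]
      dsimp only
      have : ∫ x : Tor m, (c • f) x = c • ∫ x : Tor m, f x := by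
        simp only [ContinuousMap.smul_apply]
        exact integral_smul c _
      rw [this]
      have heq : ∀ k, (∑ g' ∈ F k, (c • f) (τ g')) / ((F k).card : ℂ)
          = c • ((∑ g' ∈ F k, f (τ g')) / ((F k).card : ℂ)) := by
        intro k
        simp only [ContinuousMap.smul_apply, smul_eq_mul, ← Finset.mul_sum, mul_div_assoc]
      simp only [heq]
      exact hf.const_smul c
  -- closure
  have hmem : f ∈ closure ((span ℂ (range (tchar (m := m))) : Submodule ℂ C(Tor m, ℂ))
      : Set C(Tor m, ℂ)) := by
    have : f ∈ (span ℂ (range (tchar (m := m)))).topologicalClosure := by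
      rw [span_tchar_closure_eq_top]; trivial
    exact this
  rw [Metric.tendsto_atTop]
  intro ε hε
  obtain ⟨p, hp_mem, hp_close⟩ := Metric.mem_closure_iff.mp hmem (ε/3) (by linarith)
  have hPp := hspan p hp_mem
  rw [hP] at hPp
  rw [Metric.tendsto_atTop] at hPp
  obtain ⟨N, hN⟩ := hPp (ε/3) (by linarith)
  refine ⟨N, fun k hk => ?_⟩
  have hfp : dist f p = ‖f - p‖ := dist_eq_norm f p
  have b1 : dist ((∑ g ∈ F k, f (τ g)) / ((F k).card : ℂ))
      ((∑ g ∈ F k, p (τ g)) / ((F k).card : ℂ)) ≤ ‖f - p‖ := by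
    rw [dist_eq_norm, div_sub_div_same, ← Finset.sum_sub_distrib]
    have hNpos : (0:ℝ) < ((F k).card : ℝ) := by
      exact_mod_cast Finset.card_pos.mpr (hF.1 k)
    rw [norm_div]
    have : ‖((F k).card : ℂ)‖ = ((F k).card : ℝ) := by norm_num
    rw [this, div_le_iff₀ hNpos]
    refine (norm_sum_le _ _).trans ?_
    calc ∑ g ∈ F k, ‖f (τ g) - p (τ g)‖ ≤ ∑ _g ∈ F k, ‖f - p‖ := by
          refine Finset.sum_le_sum fun g _ => ?_
          exact le_trans (le_of_eq rfl) ((f - p).norm_coe_le_norm (τ g))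
    _ = ((F k).card : ℝ) * ‖f - p‖ := by rw [Finset.sum_const, nsmul_eq_mul]
    _ = ‖f - p‖ * ((F k).card : ℝ) := by ring
  have b2 : dist (∫ x : Tor m, p x) (∫ x : Tor m, f x) ≤ ‖f - p‖ := by
    rw [dist_eq_norm, ← integral_sub (cont_integrable p) (cont_integrable f)]
    have : ∀ x : Tor m, ‖p x - f x‖ ≤ ‖f - p‖ := by
      intro x
      rw [← norm_neg (p x - f x), neg_sub]
      exact (f - p).norm_coe_le_norm x
    refine (norm_integral_le_of_norm_le_const (ae_of_all _ this)).trans ?_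
    simp
  calc dist ((∑ g ∈ F k, f (τ g)) / ((F k).card : ℂ)) (∫ x : Tor m, f x)
      ≤ dist ((∑ g ∈ F k, f (τ g)) / ((F k).card : ℂ))
          ((∑ g ∈ F k, p (τ g)) / ((F k).card : ℂ))
        + dist ((∑ g ∈ F k, p (τ g)) / ((F k).card : ℂ)) (∫ x : Tor m, p x)
        + dist (∫ x : Tor m, p x) (∫ x : Tor m, f x) := dist_triangle4 _ _ _ _
  _ < ε/3 + ε/3 + ε/3 := by
      have := hN k hk
      have h1 : ‖f - p‖ < ε/3 := by rw [← hfp]; exact hp_close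
      refine add_lt_add (add_lt_add (lt_of_le_of_lt b1 h1) this) (lt_of_le_of_lt b2 h1)
  _ = ε := by ring

lemma avg_tendsto_integral_real {G : Type*} [AddCommGroup G]
    (τ : G →+ Tor m) (hτ : DenseRange τ) (F : ℕ → Finset G) (hF : IsFolnerSeq F)
    (f : BoundedContinuousFunction (Tor m) ℝ) :
    Tendsto (fun k => (∑ g ∈ F k, f (τ g)) / ((F k).card : ℝ)) atTop (𝓝 (∫ x, f x)) := by
  let fc : C(Tor m, ℂ) := ⟨fun x => (f x : ℂ), Complex.continuous_ofReal.comp f.continuous⟩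
  have h := avg_tendsto_integral τ hτ F hF fc
  have hIc : (∫ x : Tor m, fc x) = (((∫ x : Tor m, f x : ℝ)) : ℂ) := by
    exact integral_ofReal
  rw [hIc] at h
  have heq : ∀ k, (∑ g ∈ F k, fc (τ g)) / ((F k).card : ℂ)
      = ((((∑ g ∈ F k, f (τ g)) / ((F k).card : ℝ) : ℝ)) : ℂ) := by
    intro k
    push_cast
    rfl
  have hfun : (fun k => (∑ g ∈ F k, f (τ g)) / ((F k).card : ℝ))
      = fun k => ((∑ g ∈ F k, fc (τ g)) / ((F k).card : ℂ)).re := by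
    funext k; rw [heq k, Complex.ofReal_re]
  have h2 := (Complex.continuous_re.tendsto _).comp h
  simp only [Function.comp_def, Complex.ofReal_re] at h2
  rw [hfun]
  exact h2

end FolnerAux

/-- **Equidistribution along Følner sets.** If `τ : G → 𝕋ⁿ` has dense image, then for any
Følner sequence `(F_k)` and any Jordan measurable set `A ⊆ 𝕋ⁿ`, the proportion of `g ∈ F_k`
with `τ(g) ∈ A` tends to the Haar measure of `A`. -/
theorem folner_equidistribution_jordan (G : Type*) [AddCommGroup G] [Countable G]
    (m : ℕ) (hm : 1 ≤ m) (τ : G →+ (Fin m → AddCircle (1 : ℝ))) (hτ : DenseRange τ)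
    (F : ℕ → Finset G) (hF : IsFolnerSeq F)
    (A : Set (Fin m → AddCircle (1 : ℝ))) (hA : volume (frontier A) = 0) :
    Tendsto (fun k => (((F k : Set G) ∩ τ ⁻¹' A).ncard : ℝ) / (F k).card) atTop
      (𝓝 (volume A).toReal) := by
  have hvol : IsProbabilityMeasure (volume : Measure (FolnerAux.Tor m)) := inferInstance
  classical
  set μk : ℕ → Measure (FolnerAux.Tor m) := fun k => (((F k).card : ENNReal))⁻¹ • ∑ g ∈ F k, Measure.dirac (τ g)
    with hμk
  have hcard0 : ∀ k, ((F k).card : ENNReal) ≠ 0 := fun k => by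
    simpa using Finset.card_ne_zero_of_mem (hF.1 k).choose_spec
  have hsum_univ : (∀ k, (∑ g ∈ F k, Measure.dirac (τ g)) (Set.univ : Set (FolnerAux.Tor m))
      = ((F k).card : ENNReal)) := fun k => by
    rw [Measure.finset_sum_apply]
    simp
  have hprob : ∀ k, IsProbabilityMeasure (μk k) := fun k => by
    constructor
    rw [hμk]
    simp only [Measure.smul_apply, smul_eq_mul]
    rw [hsum_univ k, ENNReal.inv_mul_cancel (hcard0 k) (by simp)]
  have hcount : ∀ (k : ℕ) (E : Set (FolnerAux.Tor m)), MeasurableSet E →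
      μk k E = (((F k).card : ENNReal))⁻¹
        * (((F k).filter (fun g => τ g ∈ E)).card : ENNReal) := by
    intro k E hE
    rw [hμk]
    simp only [Measure.smul_apply, smul_eq_mul]
    congr 1
    rw [Measure.finset_sum_apply]
    have hd : ∀ g : G, Measure.dirac (τ g) E = if τ g ∈ E then (1:ENNReal) else 0 := fun g => by
      rw [Measure.dirac_apply' _ hE]
      simp [Set.indicator_apply]
    simp only [hd]
    rw [Finset.sum_boole]
  -- weak convergence of the empirical measures
  set Pk : ℕ → ProbabilityMeasure (FolnerAux.Tor m) := fun k => ⟨μk k, hprob k⟩ with hPk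
  set Pv : ProbabilityMeasure (FolnerAux.Tor m) := ⟨(volume : Measure (FolnerAux.Tor m)), hvol⟩ with hPv
  have hweak : Tendsto Pk atTop (𝓝 Pv) := by
    rw [ProbabilityMeasure.tendsto_iff_forall_integral_tendsto]
    intro f
    have key := FolnerAux.avg_tendsto_integral_real τ hτ F hF f
    have hint : ∀ k, ∫ x, f x ∂((Pk k : ProbabilityMeasure (FolnerAux.Tor m)) : Measure (FolnerAux.Tor m))
        = (∑ g ∈ F k, f (τ g)) / ((F k).card : ℝ) := by
      intro k
      show ∫ x, f x ∂(μk k) = _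
      rw [hμk]
      simp only
      rw [integral_smul_measure,
        integral_finset_sum_measure (fun g _ => f.integrable (μ := Measure.dirac (τ g)))]
      simp only [integral_dirac]
      rw [ENNReal.toReal_inv]
      simp [div_eq_inv_mul]
    simp only [hint]
    exact key
  -- portmanteau applied to the interior and the closure of A
  have hIntNull : (Pv : Measure (FolnerAux.Tor m)) (frontier (interior A)) = 0 :=
    measure_mono_null frontier_interior_subset hA
  have hClosNull : (Pv : Measure (FolnerAux.Tor m)) (frontier (closure A)) = 0 :=
    measure_mono_null frontier_closure_subset hA
  have hconvI := MeasureTheory.ProbabilityMeasure.tendsto_measure_of_null_frontier_of_tendsto'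
    hweak hIntNull
  have hconvC := MeasureTheory.ProbabilityMeasure.tendsto_measure_of_null_frontier_of_tendsto'
    hweak hClosNull
  -- the three measures agree
  have hCI : volume (closure A) ≤ volume (interior A) := by
    calc volume (closure A) ≤ volume (interior A ∪ frontier A) := by
          apply measure_mono
          rw [← closure_eq_interior_union_frontier]
    _ ≤ volume (interior A) + volume (frontier A) := measure_union_le _ _
    _ = volume (interior A) := by rw [hA, add_zero]
  have hIA : volume (interior A) = volume A :=
    le_antisymm (measure_mono interior_subset)
      ((measure_mono subset_closure).trans hCI)
  have hCA : volume (closure A) = volume A :=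
    le_antisymm (hCI.trans_eq hIA) (measure_mono subset_closure)
  -- real-valued convergence for interior and closure
  have hfinI : volume (interior A) ≠ ⊤ := by
    rw [hIA]; exact ((measure_mono (Set.subset_univ A)).trans_lt (measure_lt_top _ _)).ne
  have hfinC : volume (closure A) ≠ ⊤ := by
    rw [hCA]; exact ((measure_mono (Set.subset_univ A)).trans_lt (measure_lt_top _ _)).ne
  have hrealI : Tendsto (fun k => ((μk k) (interior A)).toReal) atTop
      (𝓝 (volume A).toReal) := by
    have := (ENNReal.tendsto_toReal hfinI).comp hconvI
    rw [hIA] at this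
    exact this
  have hrealC : Tendsto (fun k => ((μk k) (closure A)).toReal) atTop
      (𝓝 (volume A).toReal) := by
    have := (ENNReal.tendsto_toReal hfinC).comp hconvC
    rw [hCA] at this
    exact this
  -- identify the empirical measures of measurable sets with counting ratios
  have htoReal : ∀ (k : ℕ) (E : Set (FolnerAux.Tor m)), MeasurableSet E →
      ((μk k) E).toReal
        = (((F k).filter (fun g => τ g ∈ E)).card : ℝ) / ((F k).card : ℝ) := by
    intro k E hE
    rw [hcount k E hE, ENNReal.toReal_mul, ENNReal.toReal_inv]
    simp [div_eq_inv_mul]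
  have hncard : ∀ (k : ℕ) (S : Set (FolnerAux.Tor m)), (((F k : Set G) ∩ τ ⁻¹' S).ncard : ℝ)
      = (((F k).filter (fun g => τ g ∈ S)).card : ℝ) := by
    intro k S
    congr 1
    rw [← Set.ncard_coe_finset ((F k).filter (fun g => τ g ∈ S))]
    congr 1
    ext g
    simp [Set.mem_inter_iff]
  -- squeeze
  have hCgt : ∀ k, (0:ℝ) < ((F k).card : ℝ) := fun k => by
    exact_mod_cast Finset.card_pos.mpr (hF.1 k)
  refine tendsto_of_tendsto_of_tendsto_of_le_of_le hrealI hrealC (fun k => ?_) (fun k => ?_)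
  · rw [htoReal k _ measurableSet_interior, hncard k A]
    have hsub : (F k).filter (fun g => τ g ∈ interior A) ⊆ (F k).filter (fun g => τ g ∈ A) :=
      Finset.monotone_filter_right (F k) (fun g _ hg => interior_subset hg)
    gcongr
  · rw [htoReal k _ measurableSet_closure, hncard k A]
    have hsub : (F k).filter (fun g => τ g ∈ A) ⊆ (F k).filter (fun g => τ g ∈ closure A) :=
      Finset.monotone_filter_right (F k) (fun g _ hg => subset_closure hg)
    gcongr

end
end
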